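/- arXiv:2401.13263 — 4 statements merged into one kernel-verified Lean document; each statement's English description precedes it below -/
import Mathlib

section
/- Let n ≥ 2 and n < p < ∞, and let Ω ⊂ ℝⁿ be a bounded domain which is a local Sobolev–Poincaré imbedding domain of order p, i.e. there exist constants C ≥ 1 and λ ≥ 1 such that for every locally Lipschitz function u : Ω → ℝ, every x ∈ Ω, every 0 < r < diam(Ω) and all x₁, x₂ ∈ B(x,r) ∩ Ω, |u(x₁) − u(x₂)| ≤ C |x₁ − x₂|^{1 − n/p} (∫_{B(x,λr)∩Ω} |∇u(y)|^p dy)^{1/p}. Then the global Morrey inequality holds on Ω: there exists a constant C' such that for every locally Lipschitz function u : Ω → ℝ and all x₁, x₂ ∈ Ω, |u(x₁) − u(x₂)| ≤ C' |x₁ − x₂|^{1 − n/p} (∫_Ω |∇u(y)|^p dy)^{1/p}. -/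
open Set Metric MeasureTheory ENNReal NNReal

noncomputable section

/-- Euclidean space `ℝⁿ`. -/
abbrev Euc (n : ℕ) : Type := EuclideanSpace ℝ (Fin n)

/-- `u` is locally Lipschitz on the set `Ω`. -/
def LocallyLipschitzOnSet {n : ℕ} (u : Euc n → ℝ) (Ω : Set (Euc n)) : Prop :=
  ∀ x ∈ Ω, ∃ K : ℝ≥0, ∃ s ∈ nhdsWithin x Ω, LipschitzOnWith K u s

/-- `x` and `y` are joined by a (continuous) curve lying in `S`. -/
def JoinedByCurveIn {n : ℕ} (S : Set (Euc n)) (x y : Euc n) : Prop :=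
  ∃ γ : ℝ → Euc n, ContinuousOn γ (Icc 0 1) ∧ γ 0 = x ∧ γ 1 = y ∧ MapsTo γ (Icc 0 1) S

/-- `γ` is parametrized by arclength on `[0, L]`. -/
def ArclengthOn {n : ℕ} (γ : ℝ → Euc n) (L : ℝ) : Prop :=
  ∀ s t : ℝ, 0 ≤ s → s ≤ t → t ≤ L → eVariationOn γ (Icc s t) = ENNReal.ofReal (t - s)

/-- `Ω` is an `ε₀`-uniform domain. -/
def IsUniformWith {n : ℕ} (Ω : Set (Euc n)) (ε₀ : ℝ) : Prop :=
  ∀ x ∈ Ω, ∀ y ∈ Ω, ∃ γ : ℝ → Euc n,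
    ContinuousOn γ (Icc 0 1) ∧ γ 0 = x ∧ γ 1 = y ∧ MapsTo γ (Icc 0 1) Ω ∧
    eVariationOn γ (Icc 0 1) ≤ ENNReal.ofReal (dist x y / ε₀) ∧
    ∀ t ∈ Icc (0:ℝ) 1,
      ε₀ * (dist x (γ t) * dist y (γ t)) / dist x y ≤ infDist (γ t) (frontier Ω)

/-- `Ω` is a uniform domain. -/
def IsUniformDomain {n : ℕ} (Ω : Set (Euc n)) : Prop :=
  ∃ ε₀ : ℝ, 0 < ε₀ ∧ ε₀ ≤ 1 ∧ IsUniformWith Ω ε₀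

/-- `Ω` is an `α`-cigar domain: any two points can be joined by a rectifiable
(arclength-parametrized) curve in `Ω` along which
`∫_γ dist(z, ∂Ω)^(α-1) |dz| ≤ C |x - y|^α`. -/
def IsCigarDomain {n : ℕ} (Ω : Set (Euc n)) (α : ℝ) : Prop :=
  ∃ C : ℝ, 0 < C ∧ ∀ x ∈ Ω, ∀ y ∈ Ω, ∃ L : ℝ, 0 ≤ L ∧ ∃ γ : ℝ → Euc n,
    γ 0 = x ∧ γ L = y ∧ MapsTo γ (Icc 0 L) Ω ∧ ArclengthOn γ L ∧
    (∫⁻ t in Icc (0:ℝ) L, ENNReal.ofReal (infDist (γ t) (frontier Ω) ^ (α - 1)) ∂volume)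
      ≤ ENNReal.ofReal (C * dist x y ^ α)

/-- `Ω` is a `c₀`-John domain. -/
def IsJohnDomain {n : ℕ} (Ω : Set (Euc n)) (c₀ : ℝ) : Prop :=
  ∃ x₀ ∈ Ω, ∀ x ∈ Ω, ∃ l : ℝ, 0 ≤ l ∧ ∃ γ : ℝ → Euc n,
    γ 0 = x ∧ γ l = x₀ ∧ MapsTo γ (Icc 0 l) Ω ∧ ArclengthOn γ l ∧
    ∀ t ∈ Icc (0:ℝ) l, c₀ * t ≤ infDist (γ t) (frontier Ω)

/-- `Ω` has the `C`-slice property with respect to `x₀`. -/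
def HasSliceProperty {n : ℕ} (Ω : Set (Euc n)) (C : ℝ) (x₀ : Euc n) : Prop :=
  ∀ x ∈ Ω, ∃ γ : ℝ → Euc n,
    ContinuousOn γ (Icc 0 1) ∧ γ 0 = x₀ ∧ γ 1 = x ∧ MapsTo γ (Icc 0 1) Ω ∧
    ∃ j : ℕ, ∃ U : Fin (j + 1) → Set (Euc n),
      (∀ i, IsOpen (U i) ∧ U i ⊆ Ω) ∧
      (Pairwise fun i₁ i₂ => Disjoint (U i₁) (U i₂)) ∧
      -- (1)
      x₀ ∈ U 0 ∧ x ∈ U (Fin.last j) ∧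
      (∀ i : Fin (j + 1), 0 < (i : ℕ) → (i : ℕ) < j →
        x₀ ∈ Ω \ closure (U i) ∧ x ∈ Ω \ closure (U i) ∧
        x ∉ connectedComponentIn (Ω \ closure (U i)) x₀) ∧
      -- (2)
      (∀ i : Fin (j + 1), 0 < (i : ℕ) → (i : ℕ) < j →
        ∀ γ' : ℝ → Euc n, ContinuousOn γ' (Icc 0 1) → MapsTo γ' (Icc 0 1) Ω →
          (∃ t ∈ Icc (0:ℝ) 1, γ' t = x) → (∃ t ∈ Icc (0:ℝ) 1, γ' t = x₀) →
          ENNReal.ofReal (diam (U i)) ≤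
            ENNReal.ofReal C * eVariationOn γ' {t ∈ Icc (0:ℝ) 1 | γ' t ∈ U i}) ∧
      -- (3)
      (∀ t ∈ Icc (0:ℝ) 1,
        ball (γ t) (infDist (γ t) (frontier Ω) / C) ⊆ ⋃ i, closure (U i)) ∧
      -- (4)
      (∀ i : Fin (j + 1), ∀ t ∈ Icc (0:ℝ) 1, γ t ∈ U i →
        diam (U i) ≤ C * infDist (γ t) (frontier Ω)) ∧
      (∀ i : Fin (j + 1), ∃ xi ∈ U i, (∃ t ∈ Icc (0:ℝ) 1, γ t = xi) ∧
        ((i : ℕ) = j → xi = x) ∧ ball xi (infDist xi (frontier Ω) / C) ⊆ U i)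

/-- `Ω` satisfies the slice condition. -/
def SliceCondition {n : ℕ} (Ω : Set (Euc n)) : Prop :=
  ∃ C : ℝ, 1 < C ∧ ∀ x₀ ∈ Ω, HasSliceProperty Ω C x₀

/-- `Ω` is LLC. -/
def IsLLC {n : ℕ} (Ω : Set (Euc n)) : Prop :=
  ∃ b : ℝ, 0 < b ∧ b ≤ 1 ∧ ∀ z : Euc n, ∀ r : ℝ, 0 < r →
    (∀ x ∈ Ω ∩ ball z r, ∀ y ∈ Ω ∩ ball z r, JoinedByCurveIn (Ω ∩ ball z (r / b)) x y) ∧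
    (∀ x ∈ Ω \ ball z r, ∀ y ∈ Ω \ ball z r, JoinedByCurveIn (Ω \ ball z (b * r)) x y)

/-- `Ω` is quasiconvex. -/
def IsQuasiconvex {n : ℕ} (Ω : Set (Euc n)) : Prop :=
  ∃ C : ℝ, 1 ≤ C ∧ ∀ x ∈ Ω, ∀ y ∈ Ω, ∃ γ : ℝ → Euc n,
    ContinuousOn γ (Icc 0 1) ∧ γ 0 = x ∧ γ 1 = y ∧ MapsTo γ (Icc 0 1) Ω ∧
    eVariationOn γ (Icc 0 1) ≤ ENNReal.ofReal (C * dist x y)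

/-- The intrinsic (inner) metric of `Ω` (`∞` if there is no rectifiable curve). -/
def intrinsicDist {n : ℕ} (Ω : Set (Euc n)) (x y : Euc n) : ℝ≥0∞ :=
  ⨅ (γ : ℝ → Euc n)
    (_ : ContinuousOn γ (Icc 0 1) ∧ γ 0 = x ∧ γ 1 = y ∧ MapsTo γ (Icc 0 1) Ω),
    eVariationOn γ (Icc 0 1)

/-- The intrinsic ball `B_Ω(x, r)`. -/
def intrinsicBall {n : ℕ} (Ω : Set (Euc n)) (x : Euc n) (r : ℝ) : Set (Euc n) :=
  {y ∈ Ω | intrinsicDist Ω x y < ENNReal.ofReal r}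

/-- `Ω` is intrinsic Ahlfors `n`-regular. -/
def IntrinsicAhlforsRegular {n : ℕ} (Ω : Set (Euc n)) : Prop :=
  ∃ c : ℝ, 0 < c ∧ c < 1 ∧ ∃ r₀ : ℝ, 0 < r₀ ∧ ∀ x ∈ Ω, ∀ r : ℝ, 0 < r → r < r₀ →
    ENNReal.ofReal c * volume (ball x r) ≤ volume (intrinsicBall Ω x r)

/-- `Ω` is a local Sobolev–Poincaré imbedding domain of order `p`, `1 ≤ p < n`. -/
def LocalSPLow (n : ℕ) (Ω : Set (Euc n)) (p : ℝ) : Prop :=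
  ∃ C : ℝ, 1 ≤ C ∧ ∃ lam : ℝ, 1 ≤ lam ∧
    ∀ u : Euc n → ℝ, LocallyLipschitzOnSet u Ω →
      ∀ x ∈ Ω, ∀ r : ℝ, 0 < r → r < diam Ω →
        (⨅ c : ℝ, (∫⁻ y in ball x r ∩ Ω,
            ENNReal.ofReal |u y - c| ^ ((n : ℝ) * p / ((n : ℝ) - p)) ∂volume)
              ^ (((n : ℝ) - p) / ((n : ℝ) * p)))
          ≤ ENNReal.ofReal C *
            (∫⁻ y in ball x (lam * r) ∩ Ω,
              ENNReal.ofReal ‖fderiv ℝ u y‖ ^ p ∂volume) ^ (1 / p)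

/-- `Ω` is a local Sobolev–Poincaré imbedding domain of order `n`
(local Trudinger inequality). -/
def LocalSPn (n : ℕ) (Ω : Set (Euc n)) : Prop :=
  ∃ C : ℝ, 1 ≤ C ∧ ∃ lam : ℝ, 1 ≤ lam ∧ ∃ A : ℝ, 0 < A ∧
    ∀ u : Euc n → ℝ, LocallyLipschitzOnSet u Ω →
      ∀ x ∈ Ω, ∀ r : ℝ, 0 < r → r < diam Ω →
        0 < (∫⁻ y in ball x (lam * r) ∩ Ω,
              ENNReal.ofReal ‖fderiv ℝ u y‖ ^ (n : ℝ) ∂volume) →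
        (∫⁻ y in ball x (lam * r) ∩ Ω,
              ENNReal.ofReal ‖fderiv ℝ u y‖ ^ (n : ℝ) ∂volume) < ⊤ →
        (⨅ c : ℝ, ∫⁻ y in ball x r ∩ Ω,
            ENNReal.ofReal (Real.exp ((A * |u y - c| /
              (∫⁻ z in ball x (lam * r) ∩ Ω,
                ENNReal.ofReal ‖fderiv ℝ u z‖ ^ (n : ℝ) ∂volume).toReal
                  ^ ((1 : ℝ) / (n : ℝ))) ^ ((n : ℝ) / ((n : ℝ) - 1)))) ∂volume)
          ≤ ENNReal.ofReal C * volume (ball x r)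

/-- `Ω` is a local Sobolev–Poincaré imbedding domain of order `p`, `n < p < ∞`
(local Morrey inequality). -/
def LocalSPHigh (n : ℕ) (Ω : Set (Euc n)) (p : ℝ) : Prop :=
  ∃ C : ℝ, 1 ≤ C ∧ ∃ lam : ℝ, 1 ≤ lam ∧
    ∀ u : Euc n → ℝ, LocallyLipschitzOnSet u Ω →
      ∀ x ∈ Ω, ∀ r : ℝ, 0 < r → r < diam Ω →
        ∀ x₁ ∈ ball x r ∩ Ω, ∀ x₂ ∈ ball x r ∩ Ω,
          ENNReal.ofReal |u x₁ - u x₂| ≤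
            ENNReal.ofReal (C * dist x₁ x₂ ^ (1 - (n : ℝ) / p)) *
              (∫⁻ y in ball x (lam * r) ∩ Ω,
                ENNReal.ofReal ‖fderiv ℝ u y‖ ^ p ∂volume) ^ (1 / p)

/-- `Ω` is a `p`-Poincaré domain. -/
def PoincareDomain (n : ℕ) (Ω : Set (Euc n)) (p : ℝ) : Prop :=
  ∃ C : ℝ, 1 ≤ C ∧ ∃ lam : ℝ, 1 ≤ lam ∧
    ∀ u : Euc n → ℝ, LocallyLipschitzOnSet u Ω →
      ∀ x ∈ Ω, ∀ r : ℝ, 0 < r → r < diam Ω →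
        (volume (ball x r ∩ Ω))⁻¹ *
          (∫⁻ y in ball x r ∩ Ω,
            ENNReal.ofReal |u y - ⨍ z in ball x r ∩ Ω, u z ∂volume| ∂volume)
          ≤ ENNReal.ofReal (C * r) *
            ((volume (ball x (lam * r) ∩ Ω))⁻¹ *
              ∫⁻ y in ball x (lam * r) ∩ Ω,
                ENNReal.ofReal ‖fderiv ℝ u y‖ ^ p ∂volume) ^ (1 / p)


/-- a bounded local Sobolev–Poincaré imbedding domain of order
`p`, `n < p < ∞`, satisfies the global Morrey inequality. -/
theorem stmt6 (n : ℕ) (hn : 2 ≤ n) (p : ℝ) (hpn : (n : ℝ) < p)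
    (Ω : Set (Euc n)) (hOpen : IsOpen Ω)
    (hConn : IsConnected Ω) (hBdd : Bornology.IsBounded Ω)
    (hSP : LocalSPHigh n Ω p) :
    ∃ C' : ℝ, ∀ u : Euc n → ℝ, LocallyLipschitzOnSet u Ω →
      ∀ x₁ ∈ Ω, ∀ x₂ ∈ Ω,
        ENNReal.ofReal |u x₁ - u x₂| ≤
          ENNReal.ofReal (C' * dist x₁ x₂ ^ (1 - (n : ℝ) / p)) *
            (∫⁻ y in Ω, ENNReal.ofReal ‖fderiv ℝ u y‖ ^ p ∂volume) ^ (1 / p) := by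
  obtain ⟨C, hC, lam, hlam, h⟩ := hSP
  refine ⟨C, fun u hu x₁ hx₁ x₂ hx₂ => ?_⟩
  rcases eq_or_ne x₁ x₂ with rfl | hne
  · simp
  have hd : 0 < dist x₁ x₂ := dist_pos.mpr hne
  -- dist x₁ x₂ < diam Ω
  have hdlt : dist x₁ x₂ < diam Ω := by
    obtain ⟨ε, hε, hball⟩ := Metric.isOpen_iff.mp hOpen x₂ hx₂
    set z : Euc n := x₂ + (ε / (2 * dist x₁ x₂)) • (x₂ - x₁) with hz
    have hzΩ : z ∈ Ω := by
      apply hball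
      have : dist z x₂ = ε / 2 := by
        rw [hz, dist_eq_norm]
        have : x₂ + (ε / (2 * dist x₁ x₂)) • (x₂ - x₁) - x₂
            = (ε / (2 * dist x₁ x₂)) • (x₂ - x₁) := by abel
        rw [this, norm_smul, Real.norm_eq_abs,
          abs_of_pos (by positivity : (0:ℝ) < ε / (2 * dist x₁ x₂))]
        have hnorm : ‖x₂ - x₁‖ = dist x₁ x₂ := by
          rw [dist_comm, dist_eq_norm]
        rw [hnorm]
        field_simp
      rw [mem_ball, this]
      linarith
    have hdist : dist x₁ z = dist x₁ x₂ + ε / 2 := by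
      rw [dist_eq_norm, hz]
      have : x₁ - (x₂ + (ε / (2 * dist x₁ x₂)) • (x₂ - x₁))
          = -((1 + ε / (2 * dist x₁ x₂)) • (x₂ - x₁)) := by
        rw [add_smul, one_smul]; abel
      rw [this, norm_neg, norm_smul, Real.norm_eq_abs,
        abs_of_pos (by positivity : (0:ℝ) < 1 + ε / (2 * dist x₁ x₂))]
      have hnorm : ‖x₂ - x₁‖ = dist x₁ x₂ := by rw [dist_comm, dist_eq_norm]
      rw [hnorm]
      field_simp
    have := dist_le_diam_of_mem hBdd hx₁ hzΩ
    linarith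
  set r : ℝ := (dist x₁ x₂ + diam Ω) / 2 with hr
  have hr0 : 0 < r := by positivity
  have hrd : r < diam Ω := by rw [hr]; linarith
  have hx₁b : x₁ ∈ ball x₁ r ∩ Ω := ⟨mem_ball_self hr0, hx₁⟩
  have hx₂b : x₂ ∈ ball x₁ r ∩ Ω := ⟨by rw [mem_ball, dist_comm]; rw [hr]; linarith, hx₂⟩
  refine (h u hu x₁ hx₁ r hr0 hrd x₁ hx₁b x₂ hx₂b).trans ?_
  have hp : (0:ℝ) < p := lt_of_le_of_lt (by positivity) hpn
  exact mul_le_mul_right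
    (ENNReal.rpow_le_rpow (lintegral_mono_set inter_subset_right) (by positivity)) _
end
end

section
/- Let n ≥ 2 and 1 ≤ p < n, and let Ω ⊂ ℝⁿ be a bounded domain which is a local Sobolev–Poincaré imbedding domain of order p, i.e. there exist constants C ≥ 1 and λ ≥ 1 such that for every locally Lipschitz function u : Ω → ℝ, every x ∈ Ω and every 0 < r < diam(Ω), inf_{c∈ℝ} (∫_{B(x,r)∩Ω} |u(y) − c|^{np/(n−p)} dy)^{(n−p)/(np)} ≤ C (∫_{B(x,λr)∩Ω} |∇u(y)|^p dy)^{1/p}. Then Ω is intrinsic Ahlfors n-regular. -/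
open Set Metric MeasureTheory ENNReal NNReal

noncomputable section

variable {n : ℕ} {Ω : Set (Euc n)} {x y w z : Euc n}

lemma edist_le_intrinsicDist : edist x y ≤ intrinsicDist Ω x y := by
  refine le_iInf₂ fun γ hγ => ?_
  rw [← hγ.2.1, ← hγ.2.2.1]
  exact eVariationOn.edist_le γ (by constructor <;> norm_num) (by constructor <;> norm_num)

lemma evar_affine_le (a b : ℝ) (hab : a ≤ b) :
    eVariationOn (fun τ : ℝ => w + τ • (z - w)) (Icc a b) ≤
      ENNReal.ofReal (dist w z) * ENNReal.ofReal (b - a) := by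
  have hl : LipschitzWith ‖z - w‖₊ (fun τ : ℝ => w + τ • (z - w)) := by
    apply LipschitzWith.of_dist_le_mul
    intro s t
    simp only [dist_eq_norm]
    rw [add_sub_add_left_eq_sub, ← sub_smul, norm_smul]
    simp [mul_comm, Real.norm_eq_abs]
  have h2 : MonotoneOn (id : ℝ → ℝ) (Icc a b) := fun u _ v _ huv => huv
  calc eVariationOn (fun τ : ℝ => w + τ • (z - w)) (Icc a b)
      = eVariationOn ((fun τ : ℝ => w + τ • (z - w)) ∘ id) (Icc a b) := rfl
    _ ≤ ‖z - w‖₊ * eVariationOn (id : ℝ → ℝ) (Icc a b) :=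
        hl.lipschitzOnWith.comp_eVariationOn_le (mapsTo_univ _ _)
    _ ≤ ‖z - w‖₊ * ENNReal.ofReal (b - a) := by
        gcongr
        have := h2.eVariationOn_le (left_mem_Icc.2 hab) (right_mem_Icc.2 hab)
        simpa using this
    _ = ENNReal.ofReal (dist w z) * ENNReal.ofReal (b - a) := by
        congr 1
        rw [dist_eq_norm, ← ofReal_coe_nnreal, coe_nnnorm, norm_sub_rev]

lemma intrinsicDist_le_of_segment (hseg : segment ℝ x y ⊆ Ω) :
    intrinsicDist Ω x y ≤ ENNReal.ofReal (dist x y) := by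
  set γ : ℝ → Euc n := fun τ => x + τ • (y - x) with hγdef
  have hP : ContinuousOn γ (Icc 0 1) ∧ γ 0 = x ∧ γ 1 = y ∧ MapsTo γ (Icc 0 1) Ω := by
    refine ⟨(by fun_prop), by simp [hγdef], by simp [hγdef], ?_⟩
    intro τ hτ
    apply hseg
    rw [segment_eq_image' ℝ x y]
    exact ⟨τ, hτ, rfl⟩
  refine le_trans (iInf₂_le γ hP) ?_
  have := evar_affine_le (w := x) (z := y) 0 1 zero_le_one
  simpa using this

/-- Clamp to `[0,1]`. -/
private def cl (s : ℝ) : ℝ := max 0 (min 1 s)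

private lemma cl_mem (s : ℝ) : cl s ∈ Icc (0:ℝ) 1 :=
  ⟨le_max_left _ _, max_le (by norm_num) (min_le_left _ _)⟩

private lemma cl_mono : Monotone cl := fun a b hab =>
  max_le_max le_rfl (min_le_min le_rfl hab)

private lemma cl_cont : Continuous cl :=
  continuous_const.max (continuous_const.min continuous_id)

private lemma mono2 : Monotone (fun τ : ℝ => 2*τ) := fun a b h => by dsimp; linarith

private lemma mono2' : Monotone (fun τ : ℝ => 2*τ - 1) := fun a b h => by dsimp; linarith

private lemma cl_of_mem {s : ℝ} (hs : s ∈ Icc (0:ℝ) 1) : cl s = s := by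
  rcases hs with ⟨h0, h1⟩
  simp [cl, min_eq_right h1, max_eq_right h0]

lemma intrinsicDist_triangle_seg (hseg : segment ℝ w z ⊆ Ω) :
    intrinsicDist Ω x z ≤ intrinsicDist Ω x w + ENNReal.ofReal (dist w z) := by
  by_cases hw : intrinsicDist Ω x w = ⊤
  · simp [hw]
  apply ENNReal.le_of_forall_pos_le_add
  intro ε hε _
  -- find a curve to w with variation close to the infimum
  have hlt : intrinsicDist Ω x w < intrinsicDist Ω x w + ε / 2 :=
    ENNReal.lt_add_right hw (by simp [hε.ne'])
  rw [intrinsicDist, iInf_lt_iff] at hlt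
  obtain ⟨γ, hlt⟩ := hlt
  rw [iInf_lt_iff] at hlt
  obtain ⟨⟨hγc, hγ0, hγ1, hγm⟩, hγv⟩ := hlt
  -- build the concatenation
  set η : ℝ → Euc n := fun τ =>
    if τ ≤ 1/2 then γ (cl (2*τ)) else w + cl (2*τ - 1) • (z - w) with hηdef
  have hγ' : Continuous fun τ : ℝ => γ (cl (2*τ)) := by
    apply hγc.comp_continuous
    · exact cl_cont.comp (by continuity)
    · exact fun τ => cl_mem _
  have hp2 : Continuous fun τ : ℝ => w + cl (2*τ - 1) • (z - w) := by
    have : Continuous fun τ : ℝ => cl (2*τ - 1) := cl_cont.comp (by continuity)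
    continuity
  have hηcont : Continuous η := by
    rw [hηdef]
    apply Continuous.if_le hγ' hp2 continuous_id continuous_const
    intro τ hτ
    subst hτ
    have h1 : cl (2 * (1/2 : ℝ)) = 1 := by norm_num [cl]
    have h2 : cl (2 * (1/2 : ℝ) - 1) = 0 := by norm_num [cl]
    rw [h1, h2, hγ1]
    simp
  have hη0 : η 0 = x := by
    have : cl (2 * (0:ℝ)) = 0 := by norm_num [cl]
    simp only [hηdef]
    rw [if_pos (by norm_num), this, hγ0]
  have hη1 : η 1 = z := by
    have : cl (2 * (1:ℝ) - 1) = 1 := by norm_num [cl]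
    simp only [hηdef]
    rw [if_neg (by norm_num), this]
    simp
  have hηm : MapsTo η (Icc 0 1) Ω := by
    intro τ _
    simp only [hηdef]
    split_ifs
    · exact hγm (cl_mem _)
    · apply hseg
      rw [segment_eq_image' ℝ w z]
      exact ⟨_, cl_mem _, rfl⟩
  -- variation bound
  have hsplit : eVariationOn η (Icc 0 1) =
      eVariationOn η (Icc 0 (1/2)) + eVariationOn η (Icc (1/2) 1) := by
    have := eVariationOn.Icc_add_Icc η (s := Icc (0:ℝ) 1) (a := 0) (b := 1/2) (c := 1)
      (by norm_num) (by norm_num) (by constructor <;> norm_num)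
    rw [Set.Icc_inter_Icc, Set.Icc_inter_Icc, Set.Icc_inter_Icc] at this
    norm_num at this
    rw [← this]
  have hv1 : eVariationOn η (Icc 0 (1/2)) ≤ eVariationOn γ (Icc 0 1) := by
    have heq : EqOn η ((fun τ : ℝ => γ (cl (2*τ)))) (Icc 0 (1/2)) := by
      intro τ hτ
      simp only [hηdef]
      rw [if_pos hτ.2]
    rw [eVariationOn.eq_of_eqOn heq]
    exact eVariationOn.comp_le_of_monotoneOn γ _
      ((cl_mono.comp mono2).monotoneOn _)
      (fun τ _ => cl_mem _)
  have hv2 : eVariationOn η (Icc (1/2) 1) ≤ ENNReal.ofReal (dist w z) := by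
    have heq : EqOn η ((fun s : ℝ => w + s • (z - w)) ∘ (fun τ : ℝ => cl (2*τ - 1)))
        (Icc (1/2) 1) := by
      intro τ hτ
      simp only [hηdef, Function.comp]
      rcases eq_or_lt_of_le hτ.1 with h | h
      · rw [if_pos h.symm.le, ← h]
        have h1 : cl (2 * (1/2 : ℝ)) = 1 := by norm_num [cl]
        have h2 : cl (2 * (1/2 : ℝ) - 1) = 0 := by norm_num [cl]
        rw [h1, h2, hγ1]; simp
      · rw [if_neg (by linarith)]
    rw [eVariationOn.eq_of_eqOn heq]
    have hmono : Monotone fun τ : ℝ => cl (2*τ - 1) := cl_mono.comp mono2'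
    rw [eVariationOn.comp_eq_of_monotoneOn _ _ (hmono.monotoneOn _)]
    calc eVariationOn (fun s : ℝ => w + s • (z - w)) ((fun τ : ℝ => cl (2*τ - 1)) '' Icc (1/2) 1)
        ≤ eVariationOn (fun s : ℝ => w + s • (z - w)) (Icc 0 1) := by
          apply eVariationOn.mono
          rintro _ ⟨τ, _, rfl⟩
          exact cl_mem _
      _ ≤ ENNReal.ofReal (dist w z) * ENNReal.ofReal (1 - 0) := evar_affine_le 0 1 zero_le_one
      _ = ENNReal.ofReal (dist w z) := by norm_num
  calc intrinsicDist Ω x z ≤ eVariationOn η (Icc 0 1) :=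
        iInf₂_le η ⟨hηcont.continuousOn, hη0, hη1, hηm⟩
    _ ≤ eVariationOn γ (Icc 0 1) + ENNReal.ofReal (dist w z) := by
        rw [hsplit]; exact add_le_add hv1 hv2
    _ ≤ (intrinsicDist Ω x w + ε/2) + ENNReal.ofReal (dist w z) := by gcongr; exact hγv.le
    _ ≤ intrinsicDist Ω x w + ENNReal.ofReal (dist w z) + ε := by
        rw [add_right_comm]
        gcongr
        exact ENNReal.half_le_self

lemma intrinsicDist_le_of_ball {ε : ℝ} {y₀ : Euc n} (hball : ball y₀ ε ⊆ Ω)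
    (hw : w ∈ ball y₀ ε) (hz : z ∈ ball y₀ ε) :
    intrinsicDist Ω x z ≤ intrinsicDist Ω x w + ENNReal.ofReal (dist w z) :=
  intrinsicDist_triangle_seg (((convex_ball y₀ ε).segment_subset hw hz).trans hball)

/-- The truncated intrinsic distance function. -/
def trid {n : ℕ} (Ω : Set (Euc n)) (x : Euc n) (L : ℝ) (y : Euc n) : ℝ :=
  ((intrinsicDist Ω x y) ⊓ ENNReal.ofReal L).toReal

lemma trid_nonneg {L : ℝ} {y : Euc n} : 0 ≤ trid Ω x L y := ENNReal.toReal_nonneg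

lemma trid_lipschitzOn {ε L : ℝ} {y₀ : Euc n} (hball : ball y₀ ε ⊆ Ω) :
    LipschitzOnWith 1 (trid Ω x L) (ball y₀ ε) := by
  apply LipschitzOnWith.of_dist_le_mul
  intro w hw z hz
  rw [NNReal.coe_one, one_mul]
  have key : ∀ a b : Euc n, a ∈ ball y₀ ε → b ∈ ball y₀ ε →
      trid Ω x L a ≤ trid Ω x L b + dist b a := by
    intro a b ha hb
    have h1 : intrinsicDist Ω x a ⊓ ENNReal.ofReal L ≤
        (intrinsicDist Ω x b ⊓ ENNReal.ofReal L) + ENNReal.ofReal (dist b a) := by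
      have h2 := intrinsicDist_le_of_ball (x := x) (z := a) (w := b) hball hb ha
      rcases le_total (intrinsicDist Ω x b) (ENNReal.ofReal L) with h | h
      · rw [inf_eq_left.2 h]
        exact inf_le_left.trans h2
      · rw [inf_eq_right.2 h]
        exact inf_le_right.trans le_self_add
    have hfin : (intrinsicDist Ω x b ⊓ ENNReal.ofReal L) + ENNReal.ofReal (dist b a) ≠ ⊤ := by
      apply ENNReal.add_ne_top.2
      exact ⟨ne_top_of_le_ne_top ofReal_ne_top inf_le_right, ofReal_ne_top⟩
    have := ENNReal.toReal_mono hfin h1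
    rw [ENNReal.toReal_add (ne_top_of_le_ne_top ofReal_ne_top inf_le_right) ofReal_ne_top,
      ENNReal.toReal_ofReal dist_nonneg] at this
    exact this
  rw [Real.dist_eq, abs_sub_le_iff]
  constructor
  · have := key w z hw hz; rw [dist_comm] at this; linarith
  · have := key z w hz hw; linarith

lemma trid_locallyLipschitz (hO : IsOpen Ω) (L : ℝ) :
    LocallyLipschitzOnSet (trid Ω x L) Ω := by
  intro y hy
  obtain ⟨ε, hε, hball⟩ := Metric.isOpen_iff.1 hO y hy
  exact ⟨1, ball y ε, mem_nhdsWithin_of_mem_nhds (ball_mem_nhds _ hε),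
    trid_lipschitzOn hball⟩

lemma trid_fderiv_le (hO : IsOpen Ω) {L : ℝ} {y : Euc n} (hy : y ∈ Ω) :
    ‖fderiv ℝ (trid Ω x L) y‖ ≤ 1 := by
  obtain ⟨ε, hε, hball⟩ := Metric.isOpen_iff.1 hO y hy
  have := norm_fderiv_le_of_lipschitzOn ℝ (ball_mem_nhds y hε) (trid_lipschitzOn (x := x) (L := L) hball)
  simpa using this

lemma trid_eq_of_ge {L : ℝ} {y : Euc n} (hL : 0 ≤ L)
    (h : ENNReal.ofReal L ≤ intrinsicDist Ω x y) : trid Ω x L y = L := by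
  rw [trid, inf_eq_right.2 h, ENNReal.toReal_ofReal hL]

lemma trid_le_of_le {L a : ℝ} {y : Euc n} (ha : 0 ≤ a)
    (h : intrinsicDist Ω x y ≤ ENNReal.ofReal a) : trid Ω x L y ≤ a := by
  rw [trid]
  calc (intrinsicDist Ω x y ⊓ ENNReal.ofReal L).toReal
      ≤ (ENNReal.ofReal a).toReal :=
        ENNReal.toReal_mono ofReal_ne_top (inf_le_left.trans h)
    _ = a := ENNReal.toReal_ofReal ha

lemma trid_le_L {L : ℝ} {y : Euc n} (hL : 0 ≤ L) : trid Ω x L y ≤ L := by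
  rw [trid]
  calc (intrinsicDist Ω x y ⊓ ENNReal.ofReal L).toReal
      ≤ (ENNReal.ofReal L).toReal := ENNReal.toReal_mono ofReal_ne_top inf_le_right
    _ = L := ENNReal.toReal_ofReal hL

lemma isOpen_gt_set (hO : IsOpen Ω) {L : ℝ} (hL : 0 ≤ L) :
    IsOpen {y | y ∈ Ω ∧ ENNReal.ofReal L < intrinsicDist Ω x y} := by
  rw [Metric.isOpen_iff]
  rintro y₀ ⟨hy₀, hlt⟩
  obtain ⟨ε, hε, hball⟩ := Metric.isOpen_iff.1 hO y₀ hy₀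
  by_cases htop : intrinsicDist Ω x y₀ = ⊤
  · refine ⟨ε, hε, fun z hz => ⟨hball hz, ?_⟩⟩
    have h2 := intrinsicDist_le_of_ball (x := x) hball hz (mem_ball_self hε)
    rw [htop] at h2
    have : intrinsicDist Ω x z = ⊤ := by
      by_contra hne
      exact (ENNReal.add_ne_top.2 ⟨hne, ofReal_ne_top⟩) (top_le_iff.1 h2)
    rw [this]
    exact ofReal_lt_top.trans_le le_top
  · set D := (intrinsicDist Ω x y₀).toReal with hD
    have hLD : L < D := by
      have := ENNReal.toReal_strict_mono htop hlt
      rwa [ENNReal.toReal_ofReal hL] at this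
    set δ := (D - L) / 2 with hδ
    have hδpos : 0 < δ := by rw [hδ]; linarith
    refine ⟨min ε δ, lt_min hε hδpos, fun z hz => ?_⟩
    have hzε : z ∈ ball y₀ ε := mem_ball.2 ((mem_ball.1 hz).trans_le (min_le_left _ _))
    refine ⟨hball hzε, ?_⟩
    have h2 := intrinsicDist_le_of_ball (x := x) hball hzε (mem_ball_self hε)
    have hdz : dist z y₀ ≤ δ := by
      linarith [(mem_ball.1 hz).le.trans (min_le_right ε δ)]
    by_contra hle
    push_neg at hle
    have hy0le : intrinsicDist Ω x y₀ ≤ ENNReal.ofReal L + ENNReal.ofReal δ :=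
      h2.trans (add_le_add hle (ofReal_le_ofReal hdz))
    rw [← ENNReal.ofReal_add hL hδpos.le] at hy0le
    have hDle := ENNReal.toReal_mono ofReal_ne_top hy0le
    rw [ENNReal.toReal_ofReal (by linarith)] at hDle
    rw [← hD] at hDle
    have : L + δ < D := by rw [hδ]; linarith
    linarith

lemma isOpen_intrinsicBall (hO : IsOpen Ω) (r : ℝ) : IsOpen (intrinsicBall Ω x r) := by
  rw [Metric.isOpen_iff]
  rintro y₀ ⟨hy₀, hlt⟩
  obtain ⟨ε, hε, hball⟩ := Metric.isOpen_iff.1 hO y₀ hy₀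
  have htop : intrinsicDist Ω x y₀ ≠ ⊤ := (hlt.trans_le le_top).ne
  set D := (intrinsicDist Ω x y₀).toReal with hD
  have hDr : D < r := by
    by_cases hr : 0 ≤ r
    · have := ENNReal.toReal_strict_mono ofReal_ne_top hlt
      rwa [ENNReal.toReal_ofReal hr] at this
    · exfalso
      push_neg at hr
      rw [ENNReal.ofReal_eq_zero.2 hr.le] at hlt
      simp at hlt
  set δ := (r - D) / 2 with hδ
  have hδpos : 0 < δ := by rw [hδ]; linarith
  refine ⟨min ε δ, lt_min hε hδpos, fun z hz => ?_⟩
  have hzε : z ∈ ball y₀ ε := mem_ball.2 ((mem_ball.1 hz).trans_le (min_le_left _ _))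
  refine ⟨hball hzε, ?_⟩
  have h2 := intrinsicDist_le_of_ball (x := x) hball (mem_ball_self hε) hzε
  have hdz : dist y₀ z ≤ δ := by
    rw [dist_comm]
    linarith [(mem_ball.1 hz).le.trans (min_le_right ε δ)]
  calc intrinsicDist Ω x z ≤ intrinsicDist Ω x y₀ + ENNReal.ofReal (dist y₀ z) := h2
    _ ≤ ENNReal.ofReal D + ENNReal.ofReal δ :=
        add_le_add (le_of_eq (by rw [hD, ENNReal.ofReal_toReal htop]))
          (ofReal_le_ofReal hdz)
    _ = ENNReal.ofReal (D + δ) := (ENNReal.ofReal_add (ENNReal.toReal_nonneg) hδpos.le).symm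
    _ < ENNReal.ofReal r := by
        have hD0 : (0:ℝ) ≤ D := ENNReal.toReal_nonneg
        apply (ENNReal.ofReal_lt_ofReal_iff (by linarith)).2
        rw [hδ]; linarith

lemma intrinsicBall_subset {r : ℝ} : intrinsicBall Ω x r ⊆ ball x r ∩ Ω := by
  rintro y ⟨hy, hlt⟩
  refine ⟨?_, hy⟩
  rw [mem_ball, dist_comm]
  exact edist_lt_ofReal.mp (edist_le_intrinsicDist.trans_lt hlt)

lemma intrinsicBall_mono {r s : ℝ} (h : r ≤ s) : intrinsicBall Ω x r ⊆ intrinsicBall Ω x s :=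
  fun y ⟨hy, hlt⟩ => ⟨hy, hlt.trans_le (ofReal_le_ofReal h)⟩

lemma ball_subset_intrinsicBall {s : ℝ} (hs : ball x s ⊆ Ω) :
    ball x s ⊆ intrinsicBall Ω x s := by
  intro y hy
  have hxy : dist x y < s := by rw [dist_comm]; exact mem_ball.1 hy
  have hs0 : (0:ℝ) < s := lt_of_le_of_lt dist_nonneg hxy
  have hseg : segment ℝ x y ⊆ Ω :=
    ((convex_ball x s).segment_subset (mem_ball_self hs0) hy).trans hs
  refine ⟨hs hy, ?_⟩
  calc intrinsicDist Ω x y ≤ ENNReal.ofReal (dist x y) := intrinsicDist_le_of_segment hseg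
    _ < ENNReal.ofReal s := (ENNReal.ofReal_lt_ofReal_iff hs0).2 hxy

lemma trid_fderiv_zero (hO : IsOpen Ω) {L : ℝ} (hL : 0 ≤ L) {y : Euc n} (hy : y ∈ Ω)
    (h : ENNReal.ofReal L < intrinsicDist Ω x y) : fderiv ℝ (trid Ω x L) y = 0 := by
  have hU : IsOpen {y | y ∈ Ω ∧ ENNReal.ofReal L < intrinsicDist Ω x y} := isOpen_gt_set hO hL
  have hmem : {y | y ∈ Ω ∧ ENNReal.ofReal L < intrinsicDist Ω x y} ∈ nhds y :=
    hU.mem_nhds ⟨hy, h⟩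
  have heq : trid Ω x L =ᶠ[nhds y] fun _ => L := by
    filter_upwards [hmem] with z hz
    exact trid_eq_of_ge hL hz.2.le
  rw [heq.fderiv_eq, fderiv_fun_const]
  rfl

lemma step_lemma {p : ℝ} (hp1 : 1 ≤ p) (hpn : p < (n:ℕ)) (hn : 2 ≤ n)
    (hOpen : IsOpen Ω) (hBdd : Bornology.IsBounded Ω)
    {C lam : ℝ} (hC : 1 ≤ C)
    (hSP : ∀ u : Euc n → ℝ, LocallyLipschitzOnSet u Ω →
      ∀ x ∈ Ω, ∀ r : ℝ, 0 < r → r < diam Ω →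
        (⨅ c : ℝ, (∫⁻ y in ball x r ∩ Ω,
            ENNReal.ofReal |u y - c| ^ ((n : ℝ) * p / ((n : ℝ) - p)) ∂volume)
              ^ (((n : ℝ) - p) / ((n : ℝ) * p)))
          ≤ ENNReal.ofReal C *
            (∫⁻ y in ball x (lam * r) ∩ Ω,
              ENNReal.ofReal ‖fderiv ℝ u y‖ ^ p ∂volume) ^ (1 / p))
    (hx : x ∈ Ω) {t : ℝ} (ht : 0 < t) (htr : t ≤ diam Ω / 2) :
    ENNReal.ofReal (t/6) ^ p *
        (volume (intrinsicBall Ω x (t/6))) ^ (((n:ℝ) - p)/(n:ℝ)) ≤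
      ENNReal.ofReal C ^ p * volume (intrinsicBall Ω x t) ∨
    volume Ω ≤ 2 * volume (intrinsicBall Ω x t) := by
  haveI : Nonempty (Fin n) := ⟨⟨0, by omega⟩⟩
  have hn1 : (1:ℝ) ≤ (n:ℝ) := by exact_mod_cast Nat.one_le_iff_ne_zero.2 (by omega)
  have hp0 : (0:ℝ) < p := lt_of_lt_of_le zero_lt_one hp1
  have hnp : (0:ℝ) < (n:ℝ) - p := by linarith
  have hd : 0 < diam Ω := lt_of_lt_of_le (by linarith) htr |>.trans_le (by linarith)
  set q : ℝ := (n:ℝ) * p / ((n:ℝ) - p) with hqdef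
  set e : ℝ := ((n:ℝ) - p) / ((n:ℝ) * p) with hedef
  have hq : 0 < q := by positivity
  have he : 0 < e := by positivity
  have hqe : q * e = 1 := by
    rw [hqdef, hedef]; field_simp
  have hep : e * p = ((n:ℝ) - p)/(n:ℝ) := by
    rw [hedef]; field_simp
  set L : ℝ := 2*t/3 with hLdef
  have hL0 : (0:ℝ) ≤ L := by rw [hLdef]; linarith
  set u : Euc n → ℝ := trid Ω x L with hudef
  set A := volume (intrinsicBall Ω x (t/6)) with hAdef
  by_cases hgood : ∃ ρ, t/6 ≤ ρ ∧ ρ < diam Ω ∧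
      A ≤ volume ((ball x ρ ∩ Ω) \ intrinsicBall Ω x L)
  · -- good case
    left
    obtain ⟨ρ, hρ1, hρ2, hρ3⟩ := hgood
    have hρpos : 0 < ρ := lt_of_lt_of_le (by linarith) hρ1
    -- lower bound for each c
    have key1 : ∀ c : ℝ, ENNReal.ofReal (t/6) ^ q * A ≤
        ∫⁻ y in ball x ρ ∩ Ω, ENNReal.ofReal |u y - c| ^ q ∂volume := by
      intro c
      have hbound : ∀ (S : Set (Euc n)), MeasurableSet S → S ⊆ ball x ρ ∩ Ω →
          (∀ y ∈ S, t/6 ≤ |u y - c|) → A ≤ volume S →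
          ENNReal.ofReal (t/6) ^ q * A ≤
            ∫⁻ y in ball x ρ ∩ Ω, ENNReal.ofReal |u y - c| ^ q ∂volume := by
        intro S hSm hST hSb hSA
        calc ENNReal.ofReal (t/6) ^ q * A ≤ ENNReal.ofReal (t/6) ^ q * volume S := by gcongr
          _ = ∫⁻ _ in S, ENNReal.ofReal (t/6) ^ q ∂volume := (setLIntegral_const _ _).symm
          _ ≤ ∫⁻ y in S, ENNReal.ofReal |u y - c| ^ q ∂volume := by
              apply lintegral_mono_ae
              rw [ae_restrict_iff' hSm]
              apply Filter.Eventually.of_forall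
              intro y hy
              exact ENNReal.rpow_le_rpow (ofReal_le_ofReal (hSb y hy)) hq.le
          _ ≤ ∫⁻ y in ball x ρ ∩ Ω, ENNReal.ofReal |u y - c| ^ q ∂volume :=
              lintegral_mono_set hST
      by_cases hc : c ≤ t/3
      · apply hbound ((ball x ρ ∩ Ω) \ intrinsicBall Ω x L)
          (((isOpen_ball.inter hOpen).measurableSet).diff
            (isOpen_intrinsicBall hOpen L).measurableSet)
          diff_subset ?_ hρ3
        rintro y ⟨⟨_, hyΩ⟩, hyI⟩
        have hid : ENNReal.ofReal L ≤ intrinsicDist Ω x y := by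
          by_contra hlt
          push_neg at hlt
          exact hyI ⟨hyΩ, hlt⟩
        have : u y = L := trid_eq_of_ge hL0 hid
        rw [this, hLdef]
        rw [abs_of_nonneg (by linarith)]
        linarith
      · push_neg at hc
        apply hbound (intrinsicBall Ω x (t/6))
          (isOpen_intrinsicBall hOpen _).measurableSet
          (intrinsicBall_subset.trans (inter_subset_inter_left _ (ball_subset_ball hρ1)))
          ?_ le_rfl
        rintro y ⟨hyΩ, hlt⟩
        have hu6 : u y ≤ t/6 := trid_le_of_le (by linarith) hlt.le
        have hu0 : 0 ≤ u y := trid_nonneg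
        rw [abs_of_nonpos (by linarith)]
        linarith
    -- upper bound for the gradient integral
    have key2 : (∫⁻ y in ball x (lam * ρ) ∩ Ω,
        ENNReal.ofReal ‖fderiv ℝ u y‖ ^ p ∂volume) ≤ volume (intrinsicBall Ω x t) := by
      have hmeas : MeasurableSet (ball x (lam * ρ) ∩ Ω) :=
        (isOpen_ball.inter hOpen).measurableSet
      calc (∫⁻ y in ball x (lam * ρ) ∩ Ω, ENNReal.ofReal ‖fderiv ℝ u y‖ ^ p ∂volume)
          ≤ ∫⁻ y in ball x (lam * ρ) ∩ Ω,
              (intrinsicBall Ω x t).indicator 1 y ∂volume := by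
            apply lintegral_mono_ae
            rw [ae_restrict_iff' hmeas]
            apply Filter.Eventually.of_forall
            rintro y ⟨_, hyΩ⟩
            by_cases hcase : ENNReal.ofReal L < intrinsicDist Ω x y
            · rw [hudef, trid_fderiv_zero hOpen hL0 hyΩ hcase]
              simp only [norm_zero, ENNReal.ofReal_zero]
              rw [ENNReal.zero_rpow_of_pos hp0]
              exact zero_le
            · push_neg at hcase
              have hyI : y ∈ intrinsicBall Ω x t := by
                refine ⟨hyΩ, hcase.trans_lt ?_⟩
                apply (ENNReal.ofReal_lt_ofReal_iff ht).2
                rw [hLdef]; linarith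
              rw [indicator_of_mem hyI, Pi.one_apply]
              have h1 : ENNReal.ofReal ‖fderiv ℝ u y‖ ≤ 1 := by
                rw [show (1:ℝ≥0∞) = ENNReal.ofReal 1 by simp]
                exact ofReal_le_ofReal (trid_fderiv_le hOpen hyΩ)
              calc ENNReal.ofReal ‖fderiv ℝ u y‖ ^ p ≤ (1:ℝ≥0∞) ^ p :=
                    ENNReal.rpow_le_rpow h1 hp0.le
                _ = 1 := ENNReal.one_rpow p
        _ ≤ ∫⁻ y, (intrinsicBall Ω x t).indicator 1 y ∂volume := setLIntegral_le_lintegral _ _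
        _ = volume (intrinsicBall Ω x t) :=
            lintegral_indicator_one (isOpen_intrinsicBall hOpen t).measurableSet
    have hSPapp := hSP u (trid_locallyLipschitz hOpen L) x hx ρ hρpos hρ2
    have master : ENNReal.ofReal (t/6) * A ^ e ≤
        ENNReal.ofReal C * volume (intrinsicBall Ω x t) ^ (1/p) := by
      have h1 : ENNReal.ofReal (t/6) * A ^ e ≤
          ⨅ c : ℝ, (∫⁻ y in ball x ρ ∩ Ω,
            ENNReal.ofReal |u y - c| ^ q ∂volume) ^ e := by
        apply le_iInf
        intro c
        calc ENNReal.ofReal (t/6) * A ^ e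
            = (ENNReal.ofReal (t/6) ^ q * A) ^ e := by
              rw [ENNReal.mul_rpow_of_nonneg _ _ he.le, ← ENNReal.rpow_mul, hqe,
                ENNReal.rpow_one]
          _ ≤ (∫⁻ y in ball x ρ ∩ Ω, ENNReal.ofReal |u y - c| ^ q ∂volume) ^ e :=
              ENNReal.rpow_le_rpow (key1 c) he.le
      refine h1.trans (hSPapp.trans ?_)
      exact mul_le_mul_right (ENNReal.rpow_le_rpow key2 (by positivity)) _
    have final := ENNReal.rpow_le_rpow master hp0.le
    rw [ENNReal.mul_rpow_of_nonneg _ _ hp0.le, ← ENNReal.rpow_mul, hep,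
      ENNReal.mul_rpow_of_nonneg _ _ hp0.le, ← ENNReal.rpow_mul,
      one_div, inv_mul_cancel₀ hp0.ne', ENNReal.rpow_one] at final
    exact final
  · -- bad case
    right
    push_neg at hgood
    set d := diam Ω with hddef
    set F : ℕ → Set (Euc n) :=
      fun j => (ball x (max (t/6) (d - d/(j+1))) ∩ Ω) \ intrinsicBall Ω x L with hF
    have hρj : ∀ j : ℕ, max (t/6) (d - d/(j+1)) < d := by
      intro j
      apply max_lt
      · linarith
      · have : 0 < d / (j+1) := by positivity
        linarith
    have hFle : ∀ j, volume (F j) ≤ A := by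
      intro j
      exact (hgood _ (le_max_left _ _) (hρj j)).le
    have hFmono : Monotone F := by
      intro i j hij
      apply diff_subset_diff_left
      apply inter_subset_inter_left
      apply ball_subset_ball
      apply max_le_max le_rfl
      have : d/(j+1:ℝ) ≤ d/(i+1:ℝ) := by
        rw [div_le_div_iff₀ (by positivity) (by positivity)]
        have hcast : (i:ℝ)+1 ≤ (j:ℝ)+1 := by
          have := Nat.succ_le_succ hij
          exact_mod_cast this
        nlinarith [hd.le]
      linarith
    have hFunion : (ball x d ∩ Ω) \ intrinsicBall Ω x L ⊆ ⋃ j, F j := by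
      rintro y ⟨⟨hyb, hyΩ⟩, hyI⟩
      have hgap : 0 < d - dist y x := by
        have := mem_ball.1 hyb
        linarith
      obtain ⟨j, hj⟩ := exists_nat_one_div_lt (div_pos hgap hd)
      refine mem_iUnion.2 ⟨j, ?_⟩
      show y ∈ (ball x (max (t/6) (d - d/(j+1))) ∩ Ω) \ intrinsicBall Ω x L
      refine ⟨⟨?_, hyΩ⟩, hyI⟩
      rw [mem_ball]
      have : d / (j+1) < d - dist y x := by
        have hj' : (1:ℝ)/(j+1) < (d - dist y x)/d := by exact_mod_cast hj
        calc d/(j+1:ℝ) = d * (1/(j+1:ℝ)) := by ring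
          _ < d * ((d - dist y x)/d) := mul_lt_mul_of_pos_left hj' hd
          _ = d - dist y x := by field_simp
      have : dist y x < d - d/(j+1) := by linarith
      exact this.trans_le (le_max_right _ _)
    have hvol1 : volume ((ball x d ∩ Ω) \ intrinsicBall Ω x L) ≤ A := by
      calc volume ((ball x d ∩ Ω) \ intrinsicBall Ω x L) ≤ volume (⋃ j, F j) :=
            measure_mono hFunion
        _ = ⨆ j, volume (F j) := hFmono.measure_iUnion
        _ ≤ A := iSup_le hFle
    have hsphere : volume (Ω \ ball x d) = 0 := by
      have hsub : Ω \ ball x d ⊆ sphere x d := by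
        rintro y ⟨hyΩ, hyb⟩
        have h1 : dist x y ≤ d := dist_le_diam_of_mem hBdd hx hyΩ
        have h2 : ¬ dist y x < d := fun h => hyb (mem_ball.2 h)
        rw [dist_comm] at h1
        rw [mem_sphere]
        push_neg at h2
        linarith
      exact measure_mono_null hsub (Measure.addHaar_sphere volume x d)
    have hcover : volume Ω ≤ volume (intrinsicBall Ω x L) +
        volume ((ball x d ∩ Ω) \ intrinsicBall Ω x L) + volume (Ω \ ball x d) := by
      calc volume Ω ≤ volume (intrinsicBall Ω x L ∪
          (((ball x d ∩ Ω) \ intrinsicBall Ω x L) ∪ (Ω \ ball x d))) := by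
            apply measure_mono
            intro y hy
            by_cases h1 : y ∈ intrinsicBall Ω x L
            · exact Or.inl h1
            · by_cases h2 : y ∈ ball x d
              · exact Or.inr (Or.inl ⟨⟨h2, hy⟩, h1⟩)
              · exact Or.inr (Or.inr ⟨hy, h2⟩)
        _ ≤ volume (intrinsicBall Ω x L) +
            (volume ((ball x d ∩ Ω) \ intrinsicBall Ω x L) + volume (Ω \ ball x d)) :=
            le_trans (measure_union_le _ _) (by gcongr; exact measure_union_le _ _)
        _ = _ := by ring
    have hAle : A ≤ volume (intrinsicBall Ω x L) := by
      apply measure_mono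
      apply intrinsicBall_mono
      rw [hLdef]; linarith
    have hLt : volume (intrinsicBall Ω x L) ≤ volume (intrinsicBall Ω x t) := by
      apply measure_mono
      apply intrinsicBall_mono
      rw [hLdef]; linarith
    calc volume Ω ≤ volume (intrinsicBall Ω x L) +
        volume ((ball x d ∩ Ω) \ intrinsicBall Ω x L) + volume (Ω \ ball x d) := hcover
      _ ≤ volume (intrinsicBall Ω x t) + volume (intrinsicBall Ω x t) + 0 :=
          add_le_add (add_le_add hLt (hvol1.trans (hAle.trans hLt))) (le_of_eq hsphere)
      _ = 2 * volume (intrinsicBall Ω x t) := by ring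

/-- a bounded local Sobolev–Poincaré imbedding domain of order
`p`, `1 ≤ p < n`, is intrinsic Ahlfors `n`-regular. -/
theorem stmt10 (n : ℕ) (hn : 2 ≤ n) (p : ℝ) (hp1 : 1 ≤ p) (hpn : p < n)
    (Ω : Set (Euc n)) (hOpen : IsOpen Ω)
    (hConn : IsConnected Ω) (hBdd : Bornology.IsBounded Ω)
    (hSP : LocalSPLow n Ω p) :
    IntrinsicAhlforsRegular Ω := by
  haveI : Nonempty (Fin n) := ⟨⟨0, by omega⟩⟩
  obtain ⟨C, hC, lam, hlam, hSP'⟩ := hSP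
  have hp0 : (0:ℝ) < p := lt_of_lt_of_le zero_lt_one hp1
  have hC0 : (0:ℝ) < C := lt_of_lt_of_le zero_lt_one hC
  have hn1 : (1:ℝ) ≤ (n:ℝ) := by exact_mod_cast Nat.one_le_iff_ne_zero.2 (by omega)
  have hnp : (0:ℝ) < (n:ℝ) - p := by linarith
  set n' : ℝ := (n:ℝ) with hn'def
  -- diam Ω > 0
  obtain ⟨x₁, hx₁⟩ := hConn.nonempty
  obtain ⟨ε₁, hε₁, hball₁⟩ := Metric.isOpen_iff.1 hOpen x₁ hx₁
  have hd : 0 < diam Ω := by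
    set v : Euc n := EuclideanSpace.single (⟨0, by omega⟩ : Fin n) (ε₁/2) with hv
    have hnorm : ‖v‖ = ε₁/2 := by
      rw [hv, EuclideanSpace.norm_single]
      rw [Real.norm_eq_abs, abs_of_pos (by linarith)]
    have hmem : x₁ + v ∈ ball x₁ ε₁ := by
      rw [mem_ball, dist_eq_norm, add_sub_cancel_left, hnorm]
      linarith
    have h5 := dist_le_diam_of_mem hBdd hx₁ (hball₁ hmem)
    rw [dist_eq_norm] at h5
    rw [show x₁ - (x₁ + v) = -v by abel, norm_neg, hnorm] at h5
    linarith
  set d := diam Ω with hddef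
  set r₀ : ℝ := d / 2 with hr₀def
  have hr₀pos : 0 < r₀ := by rw [hr₀def]; linarith
  have hΩpos : 0 < volume Ω := hOpen.measure_pos volume hConn.nonempty
  have hΩfin : volume Ω < ⊤ := hBdd.measure_lt_top
  set v₁ := volume (ball (0:Euc n) 1) with hv₁def
  have hv₁pos : 0 < v₁ := measure_ball_pos _ _ one_pos
  have hv₁fin : v₁ < ⊤ := measure_ball_lt_top
  set θ : ℝ := (n' - p)/n' with hθdef
  have hθ0 : 0 < θ := by rw [hθdef]; apply div_pos hnp (by linarith)
  have hθ1 : θ < 1 := by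
    rw [hθdef, div_lt_one (by linarith)]
    linarith
  set c₁ : ℝ := ((6:ℝ)^(-n') * C^(-p)) ^ (n'/p) with hc₁def
  have hc₁pos : 0 < c₁ := by
    rw [hc₁def]
    exact Real.rpow_pos_of_pos
      (mul_pos (Real.rpow_pos_of_pos (by norm_num) _) (Real.rpow_pos_of_pos hC0 _)) _
  set c₂ : ℝ := (volume Ω).toReal / (2 * r₀ ^ n') with hc₂def
  have hr₀n : (0:ℝ) < r₀ ^ n' := Real.rpow_pos_of_pos hr₀pos n'
  have hc₂pos : 0 < c₂ := by
    rw [hc₂def]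
    exact div_pos (ENNReal.toReal_pos hΩpos.ne' hΩfin.ne) (by linarith)
  set c₃ : ℝ := v₁.toReal with hc₃def
  have hc₃pos : 0 < c₃ := ENNReal.toReal_pos hv₁pos.ne' hv₁fin.ne
  set c' : ℝ := min c₁ (min c₂ c₃) with hc'def
  have hc'pos : 0 < c' := lt_min hc₁pos (lt_min hc₂pos hc₃pos)
  -- main claim
  have main : ∀ x ∈ Ω, ∀ t : ℝ, 0 < t → t ≤ r₀ →
      ENNReal.ofReal (c' * t ^ n') ≤ volume (intrinsicBall Ω x t) := by
    intro x hx
    obtain ⟨ε, hε, hball⟩ := Metric.isOpen_iff.1 hOpen x hx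
    have base : ∀ t : ℝ, 0 < t → t ≤ ε →
        ENNReal.ofReal (c' * t ^ n') ≤ volume (intrinsicBall Ω x t) := by
      intro t ht htε
      have hb : ball x t ⊆ Ω := (ball_subset_ball htε).trans hball
      calc ENNReal.ofReal (c' * t ^ n')
          = ENNReal.ofReal (t ^ n') * ENNReal.ofReal c' := by
            rw [mul_comm, ENNReal.ofReal_mul (Real.rpow_nonneg ht.le n')]
        _ ≤ ENNReal.ofReal (t ^ n') * v₁ := by
            gcongr
            calc ENNReal.ofReal c' ≤ ENNReal.ofReal c₃ :=
                  ofReal_le_ofReal (min_le_of_right_le (min_le_right _ _))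
              _ = v₁ := by rw [hc₃def, ENNReal.ofReal_toReal hv₁fin.ne]
        _ = volume (ball x t) := by
            rw [Measure.addHaar_ball volume x ht.le, finrank_euclideanSpace_fin]
            congr 2
            rw [hn'def, Real.rpow_natCast]
        _ ≤ volume (intrinsicBall Ω x t) := measure_mono (ball_subset_intrinsicBall hb)
    have key : ∀ k : ℕ, ∀ t : ℝ, 0 < t → t ≤ r₀ → t ≤ 6^k * ε →
        ENNReal.ofReal (c' * t ^ n') ≤ volume (intrinsicBall Ω x t) := by
      intro k
      induction k with
      | zero =>
        intro t ht htr htk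
        exact base t ht (by simpa using htk)
      | succ k ih =>
        intro t ht htr htk
        by_cases hbase : t ≤ ε
        · exact base t ht hbase
        · -- use the step lemma at scale t, with induction hypothesis at t/6
          have h6 : t/6 ≤ 6^k * ε := by
            rw [pow_succ] at htk
            linarith
          have hA := ih (t/6) (by linarith) (by linarith) h6
          rcases step_lemma hp1 hpn hn hOpen hBdd hC hSP' hx ht htr with hgood | hbad
          · -- recursion
            have h60 : (0:ℝ) < t/6 := by linarith
            have hR : C^p * (c' * t ^ n') ≤ (t/6)^p * (c' * (t/6) ^ n') ^ θ := by
              have h1 : (c' * (t/6) ^ n') ^ θ = c'^θ * ((t/6) ^ n')^θ :=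
                Real.mul_rpow hc'pos.le (Real.rpow_nonneg h60.le n')
              have h1' : ((t/6) ^ n')^θ = (t/6) ^ (n' * θ) := (Real.rpow_mul h60.le n' θ).symm
              have hn'θ : n' * θ = n' - p := by
                rw [hθdef]
                field_simp
              have h2 : (t/6)^p * (t/6) ^ (n' - p) = (t/6) ^ n' := by
                rw [← Real.rpow_add h60]
                congr 1
                ring
              have hkey : C^p * c' ≤ c'^θ * 6^(-n') := by
                have hc'1 : c' ≤ c₁ := min_le_left _ _
                have e1 : c' ^ (1 - θ) ≤ c₁ ^ (1-θ) :=
                  Real.rpow_le_rpow hc'pos.le hc'1 (by linarith)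
                have e2 : c₁ ^ (1-θ) = 6^(-n') * C^(-p) := by
                  rw [hc₁def, ← Real.rpow_mul
                    (mul_pos (Real.rpow_pos_of_pos (by norm_num) _)
                      (Real.rpow_pos_of_pos hC0 _)).le]
                  rw [show (n'/p) * (1-θ) = 1 by rw [hθdef]; field_simp; ring]
                  exact Real.rpow_one _
                have e3 : c' = c'^θ * c'^(1-θ) := by
                  rw [← Real.rpow_add hc'pos]
                  norm_num
                calc C^p * c' = C^p * (c'^θ * c'^(1-θ)) := by rw [← e3]
                  _ ≤ C^p * (c'^θ * (6^(-n') * C^(-p))) := by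
                      apply mul_le_mul_of_nonneg_left _ (Real.rpow_nonneg hC0.le p)
                      exact mul_le_mul_of_nonneg_left (e1.trans_eq e2)
                        (Real.rpow_nonneg hc'pos.le θ)
                  _ = c'^θ * 6^(-n') * (C^p * C^(-p)) := by ring
                  _ = c'^θ * 6^(-n') := by
                      rw [← Real.rpow_add hC0]
                      norm_num
              have h3 : (t/6 : ℝ) ^ n' = 6^(-n') * t ^ n' := by
                rw [div_eq_mul_inv, Real.mul_rpow ht.le (by norm_num),
                  Real.inv_rpow (by norm_num : (0:ℝ) ≤ 6), ← Real.rpow_neg (by norm_num)]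
                ring
              calc C^p * (c' * t ^ n') = (C^p * c') * t ^ n' := by ring
                _ ≤ (c'^θ * 6^(-n')) * t ^ n' :=
                    mul_le_mul_of_nonneg_right hkey (Real.rpow_nonneg ht.le n')
                _ = c'^θ * ((t/6) ^ n') := by rw [h3]; ring
                _ = (t/6)^p * (c' * (t/6) ^ n') ^ θ := by
                    rw [h1, h1', hn'θ, ← h2]
                    ring
            have hofC : ENNReal.ofReal C ^ p = ENNReal.ofReal (C^p) :=
              ENNReal.ofReal_rpow_of_nonneg hC0.le hp0.le
            have chain : ENNReal.ofReal (C^p) * ENNReal.ofReal (c' * t ^ n') ≤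
                ENNReal.ofReal (C^p) * volume (intrinsicBall Ω x t) := by
              calc ENNReal.ofReal (C^p) * ENNReal.ofReal (c' * t ^ n')
                  = ENNReal.ofReal (C^p * (c' * t ^ n')) :=
                    (ENNReal.ofReal_mul (Real.rpow_nonneg hC0.le p)).symm
                _ ≤ ENNReal.ofReal ((t/6)^p * (c' * (t/6) ^ n') ^ θ) := ofReal_le_ofReal hR
                _ = ENNReal.ofReal (t/6) ^ p * ENNReal.ofReal (c' * (t/6) ^ n') ^ θ := by
                    rw [ENNReal.ofReal_mul (Real.rpow_nonneg h60.le p),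
                      ENNReal.ofReal_rpow_of_nonneg h60.le hp0.le,
                      ENNReal.ofReal_rpow_of_nonneg
                        (mul_nonneg hc'pos.le (Real.rpow_nonneg h60.le n')) hθ0.le]
                _ ≤ ENNReal.ofReal (t/6) ^ p * volume (intrinsicBall Ω x (t/6)) ^ θ :=
                    mul_le_mul_right (ENNReal.rpow_le_rpow hA hθ0.le) _
                _ ≤ ENNReal.ofReal C ^ p * volume (intrinsicBall Ω x t) := hgood
                _ = ENNReal.ofReal (C^p) * volume (intrinsicBall Ω x t) := by rw [hofC]
            exact (ENNReal.mul_le_mul_iff_right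
              (ENNReal.ofReal_pos.mpr (Real.rpow_pos_of_pos hC0 p)).ne' ofReal_ne_top).mp chain
          · -- bad case: half the domain
            have h1 : c' * t ^ n' ≤ (volume Ω).toReal / 2 := by
              have ht' : t ^ n' ≤ r₀ ^ n' :=
                Real.rpow_le_rpow ht.le htr (by linarith)
              have hc'2 : c' ≤ c₂ := min_le_of_right_le (min_le_left _ _)
              calc c' * t ^ n' ≤ c₂ * r₀ ^ n' := by
                    apply mul_le_mul hc'2 ht' (Real.rpow_nonneg ht.le n') hc₂pos.le
                _ = (volume Ω).toReal / 2 := by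
                    rw [hc₂def]
                    field_simp
            have h2 : ENNReal.ofReal ((volume Ω).toReal / 2) ≤
                volume (intrinsicBall Ω x t) := by
              have h3 : (2:ℝ≥0∞) * ENNReal.ofReal ((volume Ω).toReal / 2) = volume Ω := by
                have h5 : ENNReal.ofReal (2 * ((volume Ω).toReal / 2)) = volume Ω := by
                  rw [show (2:ℝ) * ((volume Ω).toReal/2) = (volume Ω).toReal by ring]
                  exact ENNReal.ofReal_toReal hΩfin.ne
                rw [← h5, ENNReal.ofReal_mul (by norm_num : (0:ℝ) ≤ 2)]
                norm_num
              have h4 : (2:ℝ≥0∞) * ENNReal.ofReal ((volume Ω).toReal / 2) ≤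
                  2 * volume (intrinsicBall Ω x t) := by rw [h3]; exact hbad
              exact (ENNReal.mul_le_mul_iff_right (by norm_num) (by norm_num)).mp h4
            exact (ofReal_le_ofReal h1).trans h2
    intro t ht htr
    obtain ⟨k, hk⟩ := pow_unbounded_of_one_lt (t/ε) (by norm_num : (1:ℝ) < 6)
    apply key k t ht htr
    calc t = (t/ε) * ε := by field_simp
      _ ≤ 6^k * ε := by nlinarith
  -- conclude
  have hcpos : 0 < min (1/2) (c'/c₃) := lt_min (by norm_num) (div_pos hc'pos hc₃pos)
  refine ⟨min (1/2) (c'/c₃), hcpos, ?_, r₀, hr₀pos, ?_⟩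
  · exact lt_of_le_of_lt (min_le_left _ _) (by norm_num)
  · intro x hx r hr hrr₀
    set c := min (1/2) (c'/c₃) with hcdef
    have hcc₃ : c * c₃ ≤ c' := by
      calc c * c₃ ≤ (c'/c₃) * c₃ := by
            apply mul_le_mul_of_nonneg_right (min_le_right _ _) hc₃pos.le
        _ = c' := by field_simp
    calc ENNReal.ofReal c * volume (ball x r)
        = ENNReal.ofReal c * (ENNReal.ofReal (r ^ (n:ℕ)) * v₁) := by
          rw [Measure.addHaar_ball volume x hr.le, finrank_euclideanSpace_fin]
      _ = ENNReal.ofReal (c * (r ^ (n:ℕ) * c₃)) := by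
          rw [ENNReal.ofReal_mul hcpos.le, ENNReal.ofReal_mul (pow_nonneg hr.le _),
            hc₃def, ENNReal.ofReal_toReal hv₁fin.ne]
      _ ≤ ENNReal.ofReal (c' * r ^ n') := by
          apply ofReal_le_ofReal
          rw [show c * (r ^ (n:ℕ) * c₃) = (c * c₃) * r ^ (n:ℕ) by ring]
          rw [show (r:ℝ) ^ (n:ℕ) = r ^ n' from (by rw [hn'def, Real.rpow_natCast])]
          exact mul_le_mul_of_nonneg_right hcc₃ (Real.rpow_nonneg hr.le n')
      _ ≤ volume (intrinsicBall Ω x r) := main x hx r hr hrr₀.le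
end
end

section
/- Let n ≥ 2 and n < p < ∞, and let Ω ⊂ ℝⁿ be a bounded domain which is a local Sobolev–Poincaré imbedding domain of order p, i.e. there exist constants C ≥ 1 and λ ≥ 1 such that for every locally Lipschitz function u : Ω → ℝ, every x ∈ Ω, every 0 < r < diam(Ω) and all x₁, x₂ ∈ B(x,r) ∩ Ω, |u(x₁) − u(x₂)| ≤ C |x₁ − x₂|^{1 − n/p} (∫_{B(x,λr)∩Ω} |∇u(y)|^p dy)^{1/p}. Then Ω is intrinsic Ahlfors n-regular. -/
open Set Metric MeasureTheory ENNReal NNReal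

noncomputable section

namespace Stmt12Aux

variable {n : ℕ} {Ω : Set (Euc n)}

lemma intrinsicDist_self {x : Euc n} (hx : x ∈ Ω) : intrinsicDist Ω x x = 0 := by
  refine le_antisymm ?_ zero_le
  have hconst : eVariationOn (fun _ : ℝ => x) (Icc 0 1) = 0 :=
    eVariationOn.constant_on (by rintro a ⟨_, _, rfl⟩ b ⟨_, _, rfl⟩; rfl)
  refine iInf_le_of_le (fun _ => x) (iInf_le_of_le ⟨continuousOn_const, rfl, rfl,
    fun t _ => hx⟩ ?_)
  rw [hconst]

lemma edist_le_intrinsicDist {x y : Euc n} : edist x y ≤ intrinsicDist Ω x y := by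
  refine le_iInf fun γ => le_iInf fun h => ?_
  obtain ⟨hc, h0, h1, hm⟩ := h
  calc edist x y = edist (γ 0) (γ 1) := by rw [h0, h1]
    _ ≤ _ := eVariationOn.edist_le γ (show (0:ℝ) ∈ Icc (0:ℝ) 1 by rw [mem_Icc]; constructor <;> norm_num)
      (show (1:ℝ) ∈ Icc (0:ℝ) 1 by rw [mem_Icc]; constructor <;> norm_num)

/-- Concatenation of a curve with a straight segment. -/
lemma concat_segment {x y z : Euc n} {γ : ℝ → Euc n}
    (hc : ContinuousOn γ (Icc 0 1)) (h0 : γ 0 = x) (h1 : γ 1 = y)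
    (hm : MapsTo γ (Icc 0 1) Ω) (hseg : segment ℝ y z ⊆ Ω) :
    ∃ γ₂ : ℝ → Euc n, ContinuousOn γ₂ (Icc 0 1) ∧ γ₂ 0 = x ∧ γ₂ 1 = z ∧
      MapsTo γ₂ (Icc 0 1) Ω ∧
      eVariationOn γ₂ (Icc 0 1) ≤ eVariationOn γ (Icc 0 1) + ENNReal.ofReal (dist y z) := by
  classical
  set F : ℝ → Euc n := fun sR => y + sR • (z - y) with hF
  set γ₂ : ℝ → Euc n := fun t => if t ≤ 1 / 2 then γ (2 * t) else F (2 * t - 1) with hγ₂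
  have hFcont : Continuous F := by continuity
  have hFseg : ∀ sR : ℝ, sR ∈ Icc (0:ℝ) 1 → F sR ∈ segment ℝ y z := by
    intro sR hsR
    rw [segment_eq_image' ℝ y z]
    exact ⟨sR, hsR, rfl⟩
  have hF0 : F 0 = y := by simp [hF]
  have hF1 : F 1 = z := by simp [hF]
  have hFlip : LipschitzWith ‖z - y‖₊ F := by
    apply LipschitzWith.of_dist_le_mul
    intro s t
    have : F s - F t = (s - t) • (z - y) := by
      simp only [hF]; module
    rw [dist_eq_norm, this, norm_smul, Real.dist_eq, coe_nnnorm]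
    rw [Real.norm_eq_abs, mul_comm]
  have heq1 : EqOn γ₂ (fun t => γ (2 * t)) (Icc 0 (1/2)) := by
    intro t ht
    simp only [hγ₂]
    rw [if_pos ht.2]
  have heq2 : EqOn γ₂ (fun t => F (2 * t - 1)) (Icc (1/2) 1) := by
    intro t ht
    simp only [hγ₂]
    by_cases h : t ≤ 1/2
    · have : t = 1/2 := le_antisymm h ht.1
      subst this
      rw [if_pos le_rfl]
      norm_num [h1, hF0]
    · rw [if_neg h]
  have hmono : MonotoneOn (fun t : ℝ => 2 * t) (Icc 0 (1/2)) := by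
    intro a _ b _ hab; dsimp; linarith
  have hmaps1 : MapsTo (fun t : ℝ => 2 * t) (Icc 0 (1/2)) (Icc (0:ℝ) 1) := by
    intro t ht; simp only [mem_Icc] at ht ⊢; constructor <;> linarith
  have hmaps2 : ∀ t ∈ Icc (1/2 : ℝ) 1, (2 * t - 1) ∈ Icc (0:ℝ) 1 := by
    intro t ht; simp only [mem_Icc] at ht ⊢; constructor <;> linarith
  refine ⟨γ₂, ?_, ?_, ?_, ?_, ?_⟩
  · -- continuity
    have hIic : {a : ℝ | a ≤ 1/2} = Iic (1/2) := rfl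
    apply ContinuousOn.if
    · intro a ha
      have : a = 1/2 := by
        have := ha.2
        rw [hIic, frontier_Iic] at this
        exact this
      subst this
      norm_num [h1, hF0]
    · apply (hc.comp (continuous_const.mul continuous_id).continuousOn)
      intro t ht
      rw [hIic, closure_Iic] at ht
      exact hmaps1 ⟨ht.1.1, ht.2⟩
    · exact (hFcont.comp (by continuity)).continuousOn
  · simp only [hγ₂]; norm_num [h0]
  · simp only [hγ₂]; norm_num [hF1]
  · intro t ht
    simp only [hγ₂]
    by_cases h : t ≤ 1/2
    · rw [if_pos h]
      exact hm (hmaps1 ⟨ht.1, h⟩)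
    · rw [if_neg h]
      exact hseg (hFseg _ (hmaps2 t ⟨le_of_not_ge h, ht.2⟩))
  · -- variation bound
    have hsplit := eVariationOn.Icc_add_Icc γ₂ (s := Icc 0 1) (a := 0) (b := 1/2) (c := 1)
      (by norm_num) (by norm_num) (by rw [mem_Icc]; constructor <;> norm_num)
    have e1 : Icc (0:ℝ) 1 ∩ Icc 0 (1/2) = Icc 0 (1/2) :=
      inter_eq_self_of_subset_right (Icc_subset_Icc le_rfl (by norm_num))
    have e2 : Icc (0:ℝ) 1 ∩ Icc (1/2) 1 = Icc (1/2) 1 :=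
      inter_eq_self_of_subset_right (Icc_subset_Icc (by norm_num) le_rfl)
    have e3 : Icc (0:ℝ) 1 ∩ Icc 0 1 = Icc 0 1 := inter_self _
    rw [e1, e2, e3] at hsplit
    rw [← hsplit]
    have hv1 : eVariationOn γ₂ (Icc 0 (1/2)) ≤ eVariationOn γ (Icc 0 1) := by
      rw [eVariationOn.eq_of_eqOn heq1]
      exact eVariationOn.comp_le_of_monotoneOn γ _ hmono hmaps1
    have hv2 : eVariationOn γ₂ (Icc (1/2) 1) ≤ ENNReal.ofReal (dist y z) := by
      rw [eVariationOn.eq_of_eqOn heq2]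
      have : (fun t : ℝ => F (2 * t - 1)) = F ∘ (fun t : ℝ => 2 * t - 1) := rfl
      rw [this]
      have hcomp := (hFlip.lipschitzOnWith (s := univ)).comp_eVariationOn_le
        (g := fun t : ℝ => 2 * t - 1) (s := Icc (1/2 : ℝ) 1) (mapsTo_univ _ _)
      refine hcomp.trans ?_
      have hmono2 : MonotoneOn (fun t : ℝ => 2 * t - 1) (Icc (1/2 : ℝ) 1) := by
        intro a _ b _ hab; dsimp; linarith
      have hvar2 := hmono2.eVariationOn_le (s := Icc (1/2:ℝ) 1) (a := 1/2) (b := 1)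
        (by rw [mem_Icc]; constructor <;> norm_num) (by rw [mem_Icc]; constructor <;> norm_num)
      rw [inter_self] at hvar2
      have : (2 * (1:ℝ) - 1) - (2 * (1/2 : ℝ) - 1) = 1 := by norm_num
      rw [this] at hvar2
      calc (‖z - y‖₊ : ℝ≥0∞) * eVariationOn (fun t : ℝ => 2 * t - 1) (Icc (1/2) 1)
          ≤ (‖z - y‖₊ : ℝ≥0∞) * ENNReal.ofReal 1 := by
            exact mul_le_mul_right hvar2 _
        _ = ENNReal.ofReal (dist y z) := by
            rw [ENNReal.ofReal_one, mul_one, ← ENNReal.ofReal_coe_nnreal, coe_nnnorm,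
              dist_eq_norm, norm_sub_rev]
    exact add_le_add hv1 hv2

/-- Triangle inequality for `intrinsicDist` against a straight segment. -/
lemma intrinsicDist_le_add_segment {x y z : Euc n}
    (hseg : segment ℝ y z ⊆ Ω) :
    intrinsicDist Ω x z ≤ intrinsicDist Ω x y + ENNReal.ofReal (dist y z) := by
  by_cases htop : intrinsicDist Ω x y = ⊤
  · rw [htop, top_add]; exact le_top
  refine ENNReal.le_of_forall_pos_le_add fun ε hε hlt => ?_
  have hεpos : (0 : ℝ≥0∞) < (ε : ℝ≥0∞) := by exact_mod_cast hε
  have hlt2 : intrinsicDist Ω x y < intrinsicDist Ω x y + ε :=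
    ENNReal.lt_add_right htop hεpos.ne'
  rw [intrinsicDist] at hlt2
  obtain ⟨γ, hγlt⟩ := iInf_lt_iff.mp hlt2
  obtain ⟨hγ, hvar⟩ := iInf_lt_iff.mp hγlt
  obtain ⟨hc, h0, h1, hm⟩ := hγ
  obtain ⟨γ₂, hc₂, h0₂, h1₂, hm₂, hv₂⟩ := concat_segment hc h0 h1 hm hseg
  have : intrinsicDist Ω x z ≤ eVariationOn γ₂ (Icc 0 1) :=
    iInf_le_of_le γ₂ (iInf_le_of_le ⟨hc₂, h0₂, h1₂, hm₂⟩ le_rfl)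
  calc intrinsicDist Ω x z ≤ eVariationOn γ₂ (Icc 0 1) := this
    _ ≤ eVariationOn γ (Icc 0 1) + ENNReal.ofReal (dist y z) := hv₂
    _ ≤ (intrinsicDist Ω x y + ε) + ENNReal.ofReal (dist y z) :=
        add_le_add hvar.le le_rfl
    _ = (intrinsicDist Ω x y + ENNReal.ofReal (dist y z)) + ε := by ring

/-- Finiteness of the intrinsic distance on an open connected set. -/
lemma intrinsicDist_ne_top (hO : IsOpen Ω) (hc : IsPreconnected Ω)
    {x y : Euc n} (hx : x ∈ Ω) (hy : y ∈ Ω) : intrinsicDist Ω x y ≠ ⊤ := by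
  set U : Set (Euc n) := {w | w ∈ Ω ∧ intrinsicDist Ω x w ≠ ⊤} with hU
  set V : Set (Euc n) := {w | w ∈ Ω ∧ intrinsicDist Ω x w = ⊤} with hV
  have key : ∀ w ∈ Ω, ∃ δ > 0, ball w δ ⊆ Ω ∧
      ∀ v ∈ ball w δ, (intrinsicDist Ω x v ≠ ⊤ ↔ intrinsicDist Ω x w ≠ ⊤) := by
    intro w hw
    obtain ⟨δ, hδpos, hδ⟩ := Metric.isOpen_iff.mp hO w hw
    refine ⟨δ, hδpos, hδ, fun v hv => ?_⟩
    have hseg1 : segment ℝ w v ⊆ Ω :=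
      subset_trans ((convex_ball w δ).segment_subset (mem_ball_self hδpos) hv) hδ
    have hseg2 : segment ℝ v w ⊆ Ω := by rwa [segment_symm]
    constructor
    · intro h
      exact ne_top_of_le_ne_top (ENNReal.add_ne_top.mpr ⟨h, ENNReal.ofReal_ne_top⟩)
        (intrinsicDist_le_add_segment hseg2)
    · intro h
      exact ne_top_of_le_ne_top (ENNReal.add_ne_top.mpr ⟨h, ENNReal.ofReal_ne_top⟩)
        (intrinsicDist_le_add_segment hseg1)
  have hUopen : IsOpen U := by
    rw [Metric.isOpen_iff]
    intro w hw
    obtain ⟨δ, hδpos, hδΩ, hiff⟩ := key w hw.1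
    exact ⟨δ, hδpos, fun v hv => ⟨hδΩ hv, (hiff v hv).mpr hw.2⟩⟩
  have hVopen : IsOpen V := by
    rw [Metric.isOpen_iff]
    intro w hw
    obtain ⟨δ, hδpos, hδΩ, hiff⟩ := key w hw.1
    refine ⟨δ, hδpos, fun v hv => ⟨hδΩ hv, ?_⟩⟩
    by_contra h
    exact ((hiff v hv).mp h) hw.2
  have hsub : Ω ⊆ U ∪ V := by
    intro w hw
    by_cases h : intrinsicDist Ω x w = ⊤
    · exact Or.inr ⟨hw, h⟩
    · exact Or.inl ⟨hw, h⟩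
  have hdisj : Disjoint U V := by
    rw [Set.disjoint_iff]
    rintro w ⟨⟨_, h1⟩, ⟨_, h2⟩⟩
    exact h1 h2
  have hxU : (Ω ∩ U).Nonempty := by
    refine ⟨x, hx, hx, ?_⟩
    rw [intrinsicDist_self hx]
    exact ENNReal.zero_ne_top
  have := hc.subset_left_of_subset_union hUopen hVopen hdisj hsub hxU
  exact (this hy).2

/-- Local Lipschitz estimate for the intrinsic distance. -/
lemma abs_toReal_sub_le (hO : IsOpen Ω) (hc : IsPreconnected Ω)
    {x w : Euc n} (hx : x ∈ Ω) {δ : ℝ} (hδ : ball w δ ⊆ Ω)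
    {a b : Euc n} (ha : a ∈ ball w δ) (hb : b ∈ ball w δ) :
    |(intrinsicDist Ω x a).toReal - (intrinsicDist Ω x b).toReal| ≤ dist a b := by
  have haΩ : a ∈ Ω := hδ ha
  have hbΩ : b ∈ Ω := hδ hb
  have hfa := intrinsicDist_ne_top hO hc hx haΩ
  have hfb := intrinsicDist_ne_top hO hc hx hbΩ
  have hseg1 : segment ℝ b a ⊆ Ω :=
    subset_trans ((convex_ball w δ).segment_subset hb ha) hδ
  have hseg2 : segment ℝ a b ⊆ Ω :=
    subset_trans ((convex_ball w δ).segment_subset ha hb) hδ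
  rw [abs_sub_le_iff]
  constructor
  · have h1 := intrinsicDist_le_add_segment (x := x) hseg1
    have := ENNReal.toReal_mono (ENNReal.add_ne_top.mpr ⟨hfb, ENNReal.ofReal_ne_top⟩) h1
    rw [ENNReal.toReal_add hfb ENNReal.ofReal_ne_top,
      ENNReal.toReal_ofReal dist_nonneg, dist_comm b a] at this
    linarith
  · have h1 := intrinsicDist_le_add_segment (x := x) hseg2
    have := ENNReal.toReal_mono (ENNReal.add_ne_top.mpr ⟨hfa, ENNReal.ofReal_ne_top⟩) h1
    rw [ENNReal.toReal_add hfa ENNReal.ofReal_ne_top,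
      ENNReal.toReal_ofReal dist_nonneg] at this
    linarith

/-- The truncated intrinsic distance is `1`-Lipschitz on balls inside `Ω`. -/
lemma lipschitz_u (hO : IsOpen Ω) (hc : IsPreconnected Ω)
    {x w : Euc n} (hx : x ∈ Ω) {δ : ℝ} (hδ : ball w δ ⊆ Ω) (s : ℝ) :
    LipschitzOnWith 1 (fun v => min ((intrinsicDist Ω x v).toReal) s) (ball w δ) := by
  apply LipschitzOnWith.of_dist_le_mul
  intro a ha b hb
  rw [Real.dist_eq, NNReal.coe_one, one_mul]
  calc |min ((intrinsicDist Ω x a).toReal) s - min ((intrinsicDist Ω x b).toReal) s|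
      ≤ max |(intrinsicDist Ω x a).toReal - (intrinsicDist Ω x b).toReal| |s - s| :=
        abs_min_sub_min_le_max _ _ _ _
    _ = |(intrinsicDist Ω x a).toReal - (intrinsicDist Ω x b).toReal| := by
        simp
    _ ≤ dist a b := abs_toReal_sub_le hO hc hx hδ ha hb

/-- Where the intrinsic distance exceeds the threshold, `u` is locally constant. -/
lemma fderiv_u_zero (hO : IsOpen Ω) (hc : IsPreconnected Ω)
    {x y : Euc n} (hx : x ∈ Ω) (hy : y ∈ Ω) {s : ℝ} (hs : 0 ≤ s)
    (h : ENNReal.ofReal s < intrinsicDist Ω x y) :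
    fderiv ℝ (fun v => min ((intrinsicDist Ω x v).toReal) s) y = 0 := by
  obtain ⟨δ, hδpos, hδΩ⟩ := Metric.isOpen_iff.mp hO y hy
  have hfy := intrinsicDist_ne_top hO hc hx hy
  set T : ℝ := (intrinsicDist Ω x y).toReal with hT
  have hTs : s < T := by
    rw [hT]
    have := (ENNReal.ofReal_lt_iff_lt_toReal hs hfy).mp h
    exact this
  set δ' : ℝ := min δ ((T - s) / 2) with hδ'
  have hδ'pos : 0 < δ' := lt_min hδpos (by linarith)
  have hconst : ∀ v ∈ ball y δ', (fun v => min ((intrinsicDist Ω x v).toReal) s) v = s := by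
    intro v hv
    have hvδ : v ∈ ball y δ := mem_ball.mpr (lt_of_lt_of_le (mem_ball.mp hv) (min_le_left _ _))
    have habs := abs_toReal_sub_le hO hc hx hδΩ hvδ (mem_ball_self hδpos)
    have hdvy : dist v y < (T - s) / 2 :=
      lt_of_lt_of_le (mem_ball.mp hv) (min_le_right _ _)
    have : s ≤ (intrinsicDist Ω x v).toReal := by
      have h2 := abs_le.mp habs
      have := h2.1
      linarith
    simp only [min_eq_right this]
  have hev : (fun v => min ((intrinsicDist Ω x v).toReal) s) =ᶠ[nhds y] (fun _ => s) := by
    filter_upwards [ball_mem_nhds y hδ'pos] with v hv using hconst v hv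
  rw [Filter.EventuallyEq.fderiv_eq hev, fderiv_fun_const]
  rfl

end Stmt12Aux

/-- a bounded local Sobolev–Poincaré imbedding domain of order
`p`, `n < p < ∞`, is intrinsic Ahlfors `n`-regular. -/
theorem stmt12 (n : ℕ) (hn : 2 ≤ n) (p : ℝ) (hpn : (n : ℝ) < p)
    (Ω : Set (Euc n)) (hOpen : IsOpen Ω)
    (hConn : IsConnected Ω) (hBdd : Bornology.IsBounded Ω)
    (hSP : LocalSPHigh n Ω p) :
    IntrinsicAhlforsRegular Ω := by
  classical
  obtain ⟨C, hC, lam, hlam, hSP'⟩ := hSP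
  have hnpos : (0:ℝ) < n := by exact_mod_cast (by omega : 0 < n)
  have hppos : (0:ℝ) < p := lt_trans hnpos hpn
  have hCpos : (0:ℝ) < C := lt_of_lt_of_le one_pos hC
  set κE := volume (ball (0:Euc n) 1) with hκE
  have hκpos : 0 < κE := measure_ball_pos _ _ one_pos
  have hκlt : κE < ⊤ := measure_ball_lt_top
  set κ := κE.toReal with hκ
  have hκRpos : 0 < κ := ENNReal.toReal_pos hκpos.ne' hκlt.ne
  set q : ℝ := (1/4:ℝ)^n / C ^ p with hq
  have hqpos : 0 < q := by positivity
  set c : ℝ := min (1/2) (q / κ) with hcdef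
  have hcpos : 0 < c := lt_min (by norm_num) (by positivity)
  refine ⟨c, hcpos, lt_of_le_of_lt (min_le_left _ _) (by norm_num), diam Ω, ?_, ?_⟩
  · -- diam Ω is positive
    obtain ⟨x₀, hx₀⟩ := hConn.nonempty
    obtain ⟨δ, hδpos, hδΩ⟩ := Metric.isOpen_iff.mp hOpen x₀ hx₀
    have : Nontrivial (Euc n) := by
      have : Nonempty (Fin n) := ⟨⟨0, by omega⟩⟩
      infer_instance
    obtain ⟨v, hv⟩ := exists_ne (0 : Euc n)
    have hvn : 0 < ‖v‖ := norm_pos_iff.mpr hv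
    set wpt := x₀ + (δ / (2 * ‖v‖)) • v with hwpt
    have hdist : dist wpt x₀ = δ / 2 := by
      rw [dist_eq_norm, hwpt, add_sub_cancel_left, norm_smul, Real.norm_eq_abs,
        abs_of_pos (by positivity)]
      field_simp
    have hwΩ : wpt ∈ Ω := hδΩ (by rw [mem_ball, hdist]; linarith)
    have h2 : δ / 2 ≤ diam Ω := hdist ▸ dist_le_diam_of_mem hBdd hwΩ hx₀
    linarith
  · intro x hx ρ hρpos hρdiam
    set s : ℝ := ρ / 2 with hsdef
    set a : ℝ := ρ / 4 with hadef
    have hspos : 0 < s := by rw [hsdef]; linarith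
    have hapos : 0 < a := by rw [hadef]; linarith
    have ha_lt_s : a < s := by rw [hadef, hsdef]; linarith
    have hpre := hConn.isPreconnected
    -- a far point
    have hwex : ∃ w ∈ Ω, s ≤ dist x w := by
      by_contra h
      push_neg at h
      have hsub : Ω ⊆ ball x s := fun w hw => mem_ball'.mpr (h w hw)
      have h1 := diam_mono hsub isBounded_ball
      have h2 := diam_ball (x := x) (le_of_lt hspos)
      rw [hsdef] at h2
      linarith
    obtain ⟨w, hwΩ, hws⟩ := hwex
    -- a path from x to w inside Ω
    have hpc : IsPathConnected Ω := (hOpen.isConnected_iff_isPathConnected).mp hConn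
    have hJ : JoinedIn Ω x w := hpc.joinedIn x hx w hwΩ
    set P := hJ.somePath with hP
    set g : ℝ → Euc n := fun t => P (projIcc 0 1 zero_le_one t) with hg
    have hgmem : ∀ t, g t ∈ Ω := fun t => hJ.somePath_mem _
    have hgcont : Continuous g := P.continuous.comp continuous_projIcc
    have hg0 : g 0 = x := by
      show P (projIcc 0 1 zero_le_one 0) = x
      rw [Set.projIcc_left]
      exact P.source
    have hg1 : g 1 = w := by
      show P (projIcc 0 1 zero_le_one 1) = w
      rw [Set.projIcc_right]
      exact P.target
    -- the test function
    set u : Euc n → ℝ := fun v => min ((intrinsicDist Ω x v).toReal) s with hu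
    have hucontAt : ∀ y ∈ Ω, ContinuousAt u y := by
      intro y hy
      obtain ⟨δ, hδpos, hδΩ⟩ := Metric.isOpen_iff.mp hOpen y hy
      exact (Stmt12Aux.lipschitz_u hOpen hpre hx hδΩ s).continuousOn.continuousAt
        (ball_mem_nhds y hδpos)
    have hfcont : ContinuousOn (u ∘ g) (Icc 0 1) := by
      apply Continuous.continuousOn
      rw [continuous_iff_continuousAt]
      intro t
      exact (hucontAt (g t) (hgmem t)).comp hgcont.continuousAt
    have hux : u x = 0 := by
      rw [hu]
      simp only [Stmt12Aux.intrinsicDist_self hx, ENNReal.toReal_zero]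
      exact min_eq_left hspos.le
    have hfinw := Stmt12Aux.intrinsicDist_ne_top hOpen hpre hx hwΩ
    have huw : u w = s := by
      have h1 : ENNReal.ofReal s ≤ intrinsicDist Ω x w :=
        calc ENNReal.ofReal s ≤ ENNReal.ofReal (dist x w) := ENNReal.ofReal_le_ofReal hws
          _ = edist x w := (edist_dist x w).symm
          _ ≤ _ := Stmt12Aux.edist_le_intrinsicDist
      have h2 : s ≤ (intrinsicDist Ω x w).toReal := by
        have := ENNReal.toReal_mono hfinw h1
        rwa [ENNReal.toReal_ofReal hspos.le] at this
      rw [hu]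
      exact min_eq_right h2
    -- intermediate value: a point at intrinsic distance exactly `a`
    have hIVT := intermediate_value_Icc zero_le_one hfcont
    have hmem : a ∈ Icc ((u ∘ g) 0) ((u ∘ g) 1) := by
      simp only [Function.comp_apply, hg0, hg1, hux, huw, mem_Icc]
      constructor <;> linarith
    obtain ⟨t, _, hfa⟩ := hIVT hmem
    set z := g t with hzdef
    have hzΩ : z ∈ Ω := hgmem t
    have hfz := Stmt12Aux.intrinsicDist_ne_top hOpen hpre hx hzΩ
    have huza : u z = a := hfa
    have huza' : min ((intrinsicDist Ω x z).toReal) s = a := huza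
    have hTz : (intrinsicDist Ω x z).toReal = a := by
      rcases min_cases ((intrinsicDist Ω x z).toReal) s with ⟨h1, _⟩ | ⟨h1, _⟩
      · rw [← h1]; exact huza'
      · exfalso; rw [h1] at huza'; linarith
    have hDz : intrinsicDist Ω x z = ENNReal.ofReal a := by
      rw [← hTz, ENNReal.ofReal_toReal hfz]
    have hdistz : dist x z ≤ a := by
      have h3 := Stmt12Aux.edist_le_intrinsicDist (Ω := Ω) (x := x) (y := z)
      rw [edist_dist, hDz] at h3
      exact (ENNReal.ofReal_le_ofReal_iff hapos.le).mp h3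
    have hzball : z ∈ ball x s := mem_ball'.mpr (lt_of_le_of_lt hdistz ha_lt_s)
    -- `u` is locally Lipschitz
    have huloc : LocallyLipschitzOnSet u Ω := by
      intro y hy
      obtain ⟨δ, hδpos, hδΩ⟩ := Metric.isOpen_iff.mp hOpen y hy
      exact ⟨1, ball y δ, mem_nhdsWithin_of_mem_nhds (ball_mem_nhds y hδpos),
        Stmt12Aux.lipschitz_u hOpen hpre hx hδΩ s⟩
    have key := hSP' u huloc x hx s hspos (by rw [hsdef]; linarith) z ⟨hzball, hzΩ⟩ x
      ⟨mem_ball_self hspos, hx⟩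
    rw [huza, hux, sub_zero, abs_of_nonneg hapos.le] at key
    set I := ∫⁻ y in ball x (lam * s) ∩ Ω, ENNReal.ofReal ‖fderiv ℝ u y‖ ^ p ∂volume with hI
    set W := volume (intrinsicBall Ω x ρ) with hW
    -- gradient bound
    have hfderiv_le : ∀ y ∈ Ω, ‖fderiv ℝ u y‖ ≤ 1 := by
      intro y hy
      obtain ⟨δ, hδpos, hδΩ⟩ := Metric.isOpen_iff.mp hOpen y hy
      have := norm_fderiv_le_of_lipschitzOn ℝ (ball_mem_nhds y hδpos)
        (Stmt12Aux.lipschitz_u hOpen hpre hx hδΩ s)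
      simpa using this
    -- the gradient is supported in the intrinsic ball
    have hIW : I ≤ W := by
      have hA : MeasurableSet (ball x (lam * s) ∩ Ω) := (isOpen_ball.inter hOpen).measurableSet
      rw [hI, ← lintegral_indicator hA]
      apply lintegral_le_meas (s := intrinsicBall Ω x ρ)
      · intro y
        by_cases hy : y ∈ ball x (lam * s) ∩ Ω
        · rw [indicator_of_mem hy]
          apply ENNReal.rpow_le_one _ hppos.le
          rw [← ENNReal.ofReal_one]
          exact ENNReal.ofReal_le_ofReal (hfderiv_le y hy.2)
        · rw [indicator_of_notMem hy]; exact zero_le_one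
      · intro y hy
        by_cases hyA : y ∈ ball x (lam * s) ∩ Ω
        · rw [indicator_of_mem hyA]
          have hyΩ : y ∈ Ω := hyA.2
          have hnotin : ¬ (intrinsicDist Ω x y < ENNReal.ofReal ρ) := fun hlt => hy ⟨hyΩ, hlt⟩
          have hge : ENNReal.ofReal s < intrinsicDist Ω x y :=
            lt_of_lt_of_le ((ENNReal.ofReal_lt_ofReal_iff hρpos).mpr (by rw [hsdef]; linarith))
              (not_lt.mp hnotin)
          rw [hu, Stmt12Aux.fderiv_u_zero hOpen hpre hx hyΩ hspos.le hge]
          simp only [norm_zero, ENNReal.ofReal_zero]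
          exact ENNReal.zero_rpow_of_pos hppos
        · rw [indicator_of_notMem hyA]
    -- arithmetic
    set al : ℝ := 1 - (n:ℝ)/p with hal
    have halpos : 0 < al := by
      rw [hal]
      have : (n:ℝ)/p < 1 := (div_lt_one hppos).mpr hpn
      linarith
    have hBpos : 0 < C * a ^ al := mul_pos hCpos (Real.rpow_pos_of_pos hapos _)
    have hmono : ENNReal.ofReal (C * dist z x ^ al) ≤ ENNReal.ofReal (C * a ^ al) := by
      apply ENNReal.ofReal_le_ofReal
      apply mul_le_mul_of_nonneg_left _ hCpos.le
      apply Real.rpow_le_rpow dist_nonneg _ halpos.le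
      rw [dist_comm]; exact hdistz
    have key2 : ENNReal.ofReal a ≤ ENNReal.ofReal (C * a ^ al) * W ^ (1/p) :=
      key.trans (mul_le_mul' hmono (ENNReal.rpow_le_rpow hIW (by positivity)))
    have hBne0 : ENNReal.ofReal (C * a ^ al) ≠ 0 := (ENNReal.ofReal_pos.mpr hBpos).ne'
    have key3 : ENNReal.ofReal (a / (C * a ^ al)) ≤ W ^ (1/p) := by
      rw [ENNReal.ofReal_div_of_pos hBpos,
        ENNReal.div_le_iff hBne0 ENNReal.ofReal_ne_top]
      exact key2.trans (le_of_eq (mul_comm _ _))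
    have key4 : ENNReal.ofReal ((a / (C * a ^ al)) ^ p) ≤ W := by
      have h5 := ENNReal.rpow_le_rpow key3 hppos.le
      rw [← ENNReal.rpow_mul, one_div_mul_cancel hppos.ne', ENNReal.rpow_one] at h5
      rwa [ENNReal.ofReal_rpow_of_nonneg (by positivity) hppos.le] at h5
    have harith : (a / (C * a ^ al)) ^ p = a ^ n / C ^ p := by
      have h1 : a / a ^ al = a ^ ((n:ℝ)/p) := by
        rw [hal, Real.rpow_sub hapos, Real.rpow_one, div_div_eq_mul_div,
          mul_div_cancel_left₀ _ hapos.ne']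
      rw [div_mul_eq_div_div_swap, h1,
        Real.div_rpow (Real.rpow_nonneg hapos.le _) hCpos.le,
        ← Real.rpow_natCast a n, ← Real.rpow_mul hapos.le,
        div_mul_cancel₀ (n:ℝ) hppos.ne']
    rw [harith] at key4
    -- volume of the euclidean ball
    have hvol : volume (ball x ρ) = ENNReal.ofReal (ρ ^ n) * κE := by
      rw [hκE, Measure.addHaar_ball_of_pos volume x hρpos, finrank_euclideanSpace_fin]
    calc ENNReal.ofReal c * volume (ball x ρ)
        = ENNReal.ofReal (c * (ρ ^ n * κ)) := by
          rw [hvol, ← ENNReal.ofReal_toReal hκlt.ne, ← hκ,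
            ← ENNReal.ofReal_mul (by positivity), ← ENNReal.ofReal_mul hcpos.le]
      _ ≤ ENNReal.ofReal (a ^ n / C ^ p) := by
          apply ENNReal.ofReal_le_ofReal
          have hcq : c * κ ≤ q := by
            have hcle : c ≤ q / κ := min_le_right _ _
            calc c * κ ≤ (q/κ) * κ := mul_le_mul_of_nonneg_right hcle hκRpos.le
              _ = q := div_mul_cancel₀ q hκRpos.ne'
          have haρ : a ^ n / C ^ p = ρ ^ n * q := by
            rw [hq, hadef, div_pow]
            field_simp
            rw [← mul_pow]; norm_num
          rw [haρ]
          calc c * (ρ^n * κ) = (c * κ) * ρ^n := by ring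
            _ ≤ q * ρ^n := mul_le_mul_of_nonneg_right hcq (by positivity)
            _ = ρ^n * q := mul_comm _ _
      _ ≤ W := key4
end
end

section
/- Let n ≥ 2 and n < p < ∞, and let Ω ⊂ ℝⁿ be a bounded domain which is a local Sobolev–Poincaré imbedding domain of order p, i.e. there exist constants C ≥ 1 and λ ≥ 1 such that for every locally Lipschitz function u : Ω → ℝ, every x ∈ Ω, every 0 < r < diam(Ω) and all x₁, x₂ ∈ B(x,r) ∩ Ω, |u(x₁) − u(x₂)| ≤ C |x₁ − x₂|^{1 − n/p} (∫_{B(x,λr)∩Ω} |∇u(y)|^p dy)^{1/p}. Then Ω is a p-Poincaré domain. -/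
open Set Metric MeasureTheory ENNReal NNReal

noncomputable section

/-- a bounded local Sobolev–Poincaré imbedding domain of order
`p`, `n < p < ∞`, is a `p`-Poincaré domain. -/
theorem stmt15 (n : ℕ) (hn : 2 ≤ n) (p : ℝ) (hpn : (n : ℝ) < p)
    (Ω : Set (Euc n)) (hOpen : IsOpen Ω)
    (hConn : IsConnected Ω) (hBdd : Bornology.IsBounded Ω)
    (hSP : LocalSPHigh n Ω p) :
    PoincareDomain n Ω p := by
  classical
  obtain ⟨C, hC1, lam, hlam1, hineq⟩ := hSP
  have hp0 : (0:ℝ) < p := lt_of_le_of_lt (by positivity) hpn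
  have hC0 : (0:ℝ) < C := lt_of_lt_of_le one_pos hC1
  have hlam0 : (0:ℝ) < lam := lt_of_lt_of_le one_pos hlam1
  set α : ℝ := 1 - (n:ℝ)/p with hα
  have hα0 : 0 < α := by
    have : (n:ℝ)/p < 1 := (div_lt_one hp0).2 hpn
    simp only [hα]; linarith
  have hip : (0:ℝ) < 1/p := by positivity
  have hntriv : Nontrivial (Euc n) :=
    Module.nontrivial_of_finrank_pos (R := ℝ)
      (by rw [finrank_euclideanSpace_fin]; omega)
  have hBvol : volume (ball (0:Euc n) 1) ≠ ⊤ := measure_ball_lt_top.ne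
  set Breal : ℝ := (volume (ball (0:Euc n) 1)).toReal with hBrealdef
  have hBreal0 : 0 < Breal :=
    ENNReal.toReal_pos (measure_ball_pos _ _ one_pos).ne' hBvol
  set C' : ℝ := max 1 (C * 2 ^ α * (lam^n * Breal)^(1/p)) with hC'def
  refine ⟨C', le_max_left _ _, lam, hlam1, ?_⟩
  intro u hu x hx r hr hrd
  set B := ball x r ∩ Ω with hBdef
  set B' := ball x (lam * r) ∩ Ω with hB'def
  set I := ∫⁻ y in B', ENNReal.ofReal ‖fderiv ℝ u y‖ ^ p ∂volume with hIdef
  have hxB : x ∈ B := ⟨mem_ball_self hr, hx⟩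
  have hrlam : 0 < lam * r := by positivity
  have hxB' : x ∈ B' := ⟨mem_ball_self hrlam, hx⟩
  have hBopen : IsOpen B := isOpen_ball.inter hOpen
  have hB'open : IsOpen B' := isOpen_ball.inter hOpen
  have hμB0 : volume B ≠ 0 := (hBopen.measure_pos volume ⟨x, hxB⟩).ne'
  have hμBt : volume B ≠ ⊤ :=
    (lt_of_le_of_lt (measure_mono inter_subset_left) measure_ball_lt_top).ne
  have hμB'0 : volume B' ≠ 0 := (hB'open.measure_pos volume ⟨x, hxB'⟩).ne'
  have hμB't : volume B' ≠ ⊤ :=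
    (lt_of_le_of_lt (measure_mono inter_subset_left) measure_ball_lt_top).ne
  have hVp0 : (volume B') ^ (1/p) ≠ 0 :=
    (ENNReal.rpow_pos (pos_iff_ne_zero.2 hμB'0) hμB't).ne'
  have hVpt : (volume B') ^ (1/p) ≠ ⊤ := ENNReal.rpow_ne_top_of_nonneg hip.le hμB't
  -- volume bound for the big ball
  have hVle : volume B' ≤ ENNReal.ofReal ((lam*r)^n * Breal) := by
    calc volume B' ≤ volume (ball x (lam*r)) := measure_mono inter_subset_left
      _ = ENNReal.ofReal ((lam*r)^(Module.finrank ℝ (Euc n))) * volume (ball (0:Euc n) 1) :=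
          Measure.addHaar_ball _ _ hrlam.le
      _ = ENNReal.ofReal ((lam*r)^n * Breal) := by
          rw [finrank_euclideanSpace_fin, ENNReal.ofReal_mul (by positivity),
            ENNReal.ofReal_toReal hBvol]
  -- the real constant computation
  have hreal : C * (2*r)^α * ((lam*r)^n * Breal)^(1/p)
      = (C * 2 ^ α * (lam^n * Breal)^(1/p)) * r := by
    have h2r : (2*r)^α = 2^α * r^α := Real.mul_rpow (by norm_num) hr.le
    have hlr : ((lam*r)^n * Breal : ℝ) = (lam^n * Breal) * r^n := by ring
    have h3 : ((lam^n * Breal) * r^n : ℝ)^(1/p)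
        = (lam^n*Breal)^(1/p) * ((r:ℝ)^n)^(1/p) :=
      Real.mul_rpow (by positivity) (by positivity)
    have h4 : ((r:ℝ)^n : ℝ)^(1/p) = r ^ ((n:ℝ)/p) := by
      rw [← Real.rpow_natCast r n, ← Real.rpow_mul hr.le]
      ring_nf
    have h5 : r^α * r^((n:ℝ)/p) = r := by
      rw [← Real.rpow_add hr]
      simp only [hα]
      rw [sub_add_cancel, Real.rpow_one]
    rw [h2r, hlr, h3, h4]
    calc C * (2^α * r^α) * ((lam^n*Breal)^(1/p) * r^((n:ℝ)/p))
        = (C * 2^α * (lam^n*Breal)^(1/p)) * (r^α * r^((n:ℝ)/p)) := by ring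
      _ = (C * 2^α * (lam^n*Breal)^(1/p)) * r := by rw [h5]
  -- key ENNReal inequality
  have hkey : ENNReal.ofReal (C * (2*r)^α) * (volume B') ^ (1/p)
      ≤ ENNReal.ofReal (C' * r) := by
    calc ENNReal.ofReal (C * (2*r)^α) * (volume B') ^ (1/p)
        ≤ ENNReal.ofReal (C * (2*r)^α)
            * ENNReal.ofReal (((lam*r)^n * Breal)^(1/p)) := by
          gcongr
          calc (volume B') ^ (1/p)
              ≤ (ENNReal.ofReal ((lam*r)^n * Breal)) ^ (1/p) :=
                ENNReal.rpow_le_rpow hVle hip.le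
            _ = ENNReal.ofReal (((lam*r)^n * Breal)^(1/p)) :=
                ENNReal.ofReal_rpow_of_nonneg (by positivity) hip.le
      _ = ENNReal.ofReal (C * (2*r)^α * ((lam*r)^n * Breal)^(1/p)) :=
          (ENNReal.ofReal_mul (by positivity)).symm
      _ ≤ ENNReal.ofReal (C' * r) := by
          apply ENNReal.ofReal_le_ofReal
          rw [hreal]
          exact mul_le_mul_of_nonneg_right (le_max_right _ _) hr.le
  have hmain : ENNReal.ofReal (C * (2*r)^α)
      ≤ ENNReal.ofReal (C' * r) * ((volume B') ^ (1/p))⁻¹ := by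
    rw [← div_eq_mul_inv]
    exact (ENNReal.le_div_iff_mul_le (Or.inl hVp0) (Or.inl hVpt)).2 hkey
  have hRHSeq : ENNReal.ofReal (C' * r) * ((volume B')⁻¹ * I) ^ (1/p)
      = (ENNReal.ofReal (C' * r) * ((volume B') ^ (1/p))⁻¹) * I ^ (1/p) := by
    rw [ENNReal.mul_rpow_of_nonneg _ _ hip.le, ENNReal.inv_rpow, mul_assoc]
  rcases eq_top_or_lt_top I with hItop | hIlt
  · -- infinite energy: RHS is infinite
    have : ENNReal.ofReal (C' * r) * ((volume B')⁻¹ * I) ^ (1/p) = ⊤ := by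
      rw [hRHSeq, hItop, ENNReal.top_rpow_of_pos hip]
      refine ENNReal.mul_top (mul_ne_zero ?_ (ENNReal.inv_ne_zero.2 hVpt))
      simp only [ne_eq, ENNReal.ofReal_eq_zero, not_le]
      have : (1:ℝ) ≤ C' := le_max_left _ _
      nlinarith
    rw [this]
    exact le_top
  · have hIne : I ≠ ⊤ := hIlt.ne
    set M : ℝ := C * (2*r)^α * I.toReal^(1/p) with hMdef
    have hM0 : 0 ≤ M := by positivity
    have hofM : ENNReal.ofReal M = ENNReal.ofReal (C*(2*r)^α) * I^(1/p) := by
      rw [hMdef, ENNReal.ofReal_mul (by positivity),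
        ← ENNReal.ofReal_rpow_of_nonneg ENNReal.toReal_nonneg hip.le,
        ENNReal.ofReal_toReal hIne]
    -- oscillation bound
    have hosc : ∀ x₁ ∈ B, ∀ x₂ ∈ B, |u x₁ - u x₂| ≤ M := by
      intro x₁ h₁ x₂ h₂
      have h := hineq u hu x hx r hr hrd x₁ h₁ x₂ h₂
      have hd2r : dist x₁ x₂ ≤ 2*r := by
        have e1 := mem_ball.1 h₁.1
        have e2 := mem_ball.1 h₂.1
        calc dist x₁ x₂ ≤ dist x₁ x + dist x x₂ := dist_triangle _ _ _
          _ ≤ 2*r := by rw [dist_comm x x₂]; linarith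
      have hd : dist x₁ x₂ ^ α ≤ (2*r)^α :=
        Real.rpow_le_rpow dist_nonneg hd2r hα0.le
      have h2 : ENNReal.ofReal |u x₁ - u x₂| ≤ ENNReal.ofReal M := by
        calc ENNReal.ofReal |u x₁ - u x₂|
            ≤ ENNReal.ofReal (C * dist x₁ x₂ ^ α) * I^(1/p) := h
          _ ≤ ENNReal.ofReal (C * (2*r)^α) * I^(1/p) :=
              mul_le_mul_left (ENNReal.ofReal_le_ofReal
                (mul_le_mul_of_nonneg_left hd hC0.le)) _
          _ = ENNReal.ofReal M := hofM.symm
      exact (ENNReal.ofReal_le_ofReal_iff hM0).1 h2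
    -- continuity of u on Ω
    have hcont : ContinuousOn u Ω := by
      intro z hz
      obtain ⟨K, s, hs, hK⟩ := hu z hz
      have hz' : z ∈ s := mem_of_mem_nhdsWithin hz hs
      exact (hK.continuousOn.continuousWithinAt hz').mono_of_mem_nhdsWithin hs
    have hBmeas : MeasurableSet B := hBopen.measurableSet
    have haesm : AEStronglyMeasurable u (volume.restrict B) :=
      (hcont.mono inter_subset_right).aestronglyMeasurable hBmeas
    have hInt : IntegrableOn u B volume := by
      refine ⟨haesm, HasFiniteIntegral.restrict_of_bounded
        (C := M + |u x|) hμBt.lt_top (ae_restrict_of_forall_mem hBmeas ?_)⟩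
      intro y hy
      have h1 := hosc y hy x hxB
      have : |u y| ≤ |u y - u x| + |u x| := by
        have := abs_sub_abs_le_abs_sub (u y) (u x)
        linarith [abs_nonneg (u y - u x)]
      simp only [Real.norm_eq_abs]
      linarith
    set A : ℝ := ⨍ z in B, u z ∂volume with hAdef
    set T : ℝ := (volume B).toReal with hTdef
    have hT0 : 0 < T := ENNReal.toReal_pos hμB0 hμBt
    -- pointwise distance to the average
    have hptwise : ∀ y ∈ B, |u y - A| ≤ M := by
      intro y hy
      have hconst : IntegrableOn (fun _ : Euc n => u y) B volume :=
        integrableOn_const hμBt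
      have hIsub : IntegrableOn (fun z => u y - u z) B volume := hconst.sub hInt
      have hval : ∫ z in B, (u y - u z) ∂volume
          = T * u y - ∫ z in B, u z ∂volume := by
        rw [integral_sub hconst hInt, setIntegral_const, smul_eq_mul]; rfl
      have hnorm : ‖∫ z in B, (u y - u z) ∂volume‖ ≤ M * T :=
        norm_setIntegral_le_of_norm_le_const hμBt.lt_top
          (fun z hz => by simpa [Real.norm_eq_abs] using hosc y hy z hz)
      have hAval : A = T⁻¹ * ∫ z in B, u z ∂volume := by
        rw [hAdef, setAverage_eq, smul_eq_mul]; rfl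
      have heq : u y - A = T⁻¹ * ∫ z in B, (u y - u z) ∂volume := by
        rw [hval, hAval]
        field_simp
      rw [heq, abs_mul, abs_inv, abs_of_pos hT0]
      rw [Real.norm_eq_abs] at hnorm
      calc T⁻¹ * |∫ z in B, (u y - u z) ∂volume| ≤ T⁻¹ * (M * T) := by
            exact mul_le_mul_of_nonneg_left hnorm (by positivity)
        _ = M := by field_simp
    -- lintegral bound
    have hlint : (∫⁻ y in B, ENNReal.ofReal |u y - A| ∂volume)
        ≤ ENNReal.ofReal M * volume B := by
      calc (∫⁻ y in B, ENNReal.ofReal |u y - A| ∂volume)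
          ≤ ∫⁻ _ in B, ENNReal.ofReal M ∂volume :=
            setLIntegral_mono' hBmeas
              (fun y hy => ENNReal.ofReal_le_ofReal (hptwise y hy))
        _ = ENNReal.ofReal M * volume B := setLIntegral_const _ _
    calc (volume B)⁻¹ * (∫⁻ y in B, ENNReal.ofReal |u y - A| ∂volume)
        ≤ (volume B)⁻¹ * (ENNReal.ofReal M * volume B) := by gcongr
      _ = ENNReal.ofReal M * ((volume B)⁻¹ * volume B) := by ring
      _ = ENNReal.ofReal M := by rw [ENNReal.inv_mul_cancel hμB0 hμBt, mul_one]
      _ = ENNReal.ofReal (C*(2*r)^α) * I^(1/p) := hofM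
      _ ≤ (ENNReal.ofReal (C' * r) * ((volume B') ^ (1/p))⁻¹) * I^(1/p) :=
          mul_le_mul_left hmain _
      _ = ENNReal.ofReal (C' * r) * ((volume B')⁻¹ * I) ^ (1/p) := hRHSeq.symm
end
end
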